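/- arXiv:2412.17116 — 9 statements merged into one kernel-verified Lean document; each statement's English description precedes it below -/
import Mathlib

section
/- The topological closure of V equals V̄, i.e., cl(V) = V̄. In particular, every point (v̄, z̄) ∈ V̄ is the limit as ε → 0+ of points (v_ε, z̄) ∈ V obtained by setting (v_ε)_i = v̄_i + ε for every index i such that v̄_i = b_j and z̄_{ij} = 1 for some j, and (v_ε)_i = v̄_i otherwise. -/
open Filter Topology Set

/-- `cl(V) = V̄`.  In particular every `(v̄, z̄) ∈ V̄` is the limit as `ε → 0⁺` of points
`(v_ε, z̄) ∈ V`, where `(v_ε)ᵢ = v̄ᵢ + ε` for every `i` such that `v̄ᵢ = bⱼ` and `z̄_{ij} = 1`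
for some `j`, and `(v_ε)ᵢ = v̄ᵢ` otherwise. -/
theorem stmt2 (m ℓ : ℕ) (hm : 1 ≤ m) (hℓ : 1 ≤ ℓ)
    (b : Fin ℓ → ℝ) (hb : StrictMono b) :
    closure {vz : (Fin m → ℝ) × (Fin m → Fin ℓ → ℝ) |
        ∀ i j, vz.2 i j = if b j < vz.1 i then 1 else 0} =
      {vz : (Fin m → ℝ) × (Fin m → Fin ℓ → ℝ) |
        (∀ i j, vz.2 i j = 0 ∨ vz.2 i j = 1) ∧
        ∀ i j, 0 ≤ (vz.1 i - b j) * vz.2 i j ∧ (vz.1 i - b j) * (1 - vz.2 i j) ≤ 0} ∧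
    ∀ vz : (Fin m → ℝ) × (Fin m → Fin ℓ → ℝ),
      vz ∈ {vz : (Fin m → ℝ) × (Fin m → Fin ℓ → ℝ) |
          (∀ i j, vz.2 i j = 0 ∨ vz.2 i j = 1) ∧
          ∀ i j, 0 ≤ (vz.1 i - b j) * vz.2 i j ∧ (vz.1 i - b j) * (1 - vz.2 i j) ≤ 0} →
      ∀ vε : ℝ → Fin m → ℝ,
        (∀ ε i, ((∃ j, vz.1 i = b j ∧ vz.2 i j = 1) → vε ε i = vz.1 i + ε) ∧
                ((∀ j, ¬(vz.1 i = b j ∧ vz.2 i j = 1)) → vε ε i = vz.1 i)) →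
        (∃ ε₀ > (0 : ℝ), ∀ ε : ℝ, 0 < ε → ε < ε₀ →
          (vε ε, vz.2) ∈ {vz' : (Fin m → ℝ) × (Fin m → Fin ℓ → ℝ) |
            ∀ i j, vz'.2 i j = if b j < vz'.1 i then 1 else 0}) ∧
        Filter.Tendsto (fun ε : ℝ => ((vε ε, vz.2) : (Fin m → ℝ) × (Fin m → Fin ℓ → ℝ)))
          (nhdsWithin 0 (Set.Ioi 0)) (nhds vz) := by
  classical
  -- the "key" claim: second conjunct
  have key : ∀ vz : (Fin m → ℝ) × (Fin m → Fin ℓ → ℝ),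
      vz ∈ {vz : (Fin m → ℝ) × (Fin m → Fin ℓ → ℝ) |
          (∀ i j, vz.2 i j = 0 ∨ vz.2 i j = 1) ∧
          ∀ i j, 0 ≤ (vz.1 i - b j) * vz.2 i j ∧ (vz.1 i - b j) * (1 - vz.2 i j) ≤ 0} →
      ∀ vε : ℝ → Fin m → ℝ,
        (∀ ε i, ((∃ j, vz.1 i = b j ∧ vz.2 i j = 1) → vε ε i = vz.1 i + ε) ∧
                ((∀ j, ¬(vz.1 i = b j ∧ vz.2 i j = 1)) → vε ε i = vz.1 i)) →
        (∃ ε₀ > (0 : ℝ), ∀ ε : ℝ, 0 < ε → ε < ε₀ →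
          (vε ε, vz.2) ∈ {vz' : (Fin m → ℝ) × (Fin m → Fin ℓ → ℝ) |
            ∀ i j, vz'.2 i j = if b j < vz'.1 i then 1 else 0}) ∧
        Filter.Tendsto (fun ε : ℝ => ((vε ε, vz.2) : (Fin m → ℝ) × (Fin m → Fin ℓ → ℝ)))
          (nhdsWithin 0 (Set.Ioi 0)) (nhds vz) := by
    rintro ⟨v, z⟩ ⟨h01, hineq⟩ vε hvε
    dsimp only at h01 hineq hvε
    have h1 : ∀ i j, z i j = 1 → b j ≤ v i := by
      intro i j h
      have := (hineq i j).1
      rw [h] at this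
      nlinarith
    have h0 : ∀ i j, z i j = 0 → v i ≤ b j := by
      intro i j h
      have := (hineq i j).2
      rw [h] at this
      nlinarith
    -- ε₀
    have hne : (Finset.univ : Finset (Fin m × Fin ℓ)).Nonempty :=
      ⟨(⟨0, hm⟩, ⟨0, hℓ⟩), Finset.mem_univ _⟩
    set f : Fin m × Fin ℓ → ℝ := fun p => if v p.1 < b p.2 then b p.2 - v p.1 else 1 with hf
    set ε₀ : ℝ := Finset.univ.inf' hne f with hε₀def
    have hε₀pos : 0 < ε₀ := by
      rw [hε₀def, Finset.lt_inf'_iff]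
      intro p _
      by_cases h : v p.1 < b p.2
      · simp only [hf, if_pos h]; linarith
      · simp only [hf, if_neg h]; norm_num
    have hε₀le : ∀ i j, v i < b j → ε₀ ≤ b j - v i := by
      intro i j h
      have h2 : f (i, j) = b j - v i := by simp [hf, h]
      rw [hε₀def]
      calc Finset.univ.inf' hne f ≤ f (i, j) := Finset.inf'_le f (Finset.mem_univ (i, j))
        _ = b j - v i := h2
    constructor
    · refine ⟨ε₀, hε₀pos, ?_⟩
      intro ε hε hεlt
      intro i j
      show z i j = if b j < vε ε i then 1 else 0
      by_cases hc : ∃ j', v i = b j' ∧ z i j' = 1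
      · have heq : vε ε i = v i + ε := (hvε ε i).1 hc
        rw [heq]
        rcases h01 i j with hz | hz
        · -- z i j = 0, so v i ≤ b j
          have hle := h0 i j hz
          rcases hle.lt_or_eq with hlt | heq2
          · have : ¬ b j < v i + ε := by
              have := hε₀le i j hlt
              linarith
            simp [this, hz]
          · -- v i = b j, contradicts hc via injectivity
            exfalso
            obtain ⟨j', hj', hz'⟩ := hc
            have : j = j' := hb.injective (heq2.symm.trans hj')
            rw [← this] at hz'
            rw [hz] at hz'
            norm_num at hz'
        · have := h1 i j hz
          have : b j < v i + ε := by linarith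
          simp [this, hz]
      · have heq : vε ε i = v i := (hvε ε i).2 (not_exists.mp hc)
        rw [heq]
        rcases h01 i j with hz | hz
        · have := h0 i j hz
          have : ¬ b j < v i := not_lt.mpr this
          simp [this, hz]
        · have hle := h1 i j hz
          rcases hle.lt_or_eq with hlt | heq2
          · simp [hlt, hz]
          · exfalso
            exact hc ⟨j, heq2.symm, hz⟩
    · -- tendsto
      have h1' : Tendsto (fun ε : ℝ => vε ε) (nhdsWithin 0 (Set.Ioi 0)) (nhds v) := by
        rw [tendsto_pi_nhds]
        intro i
        by_cases hc : ∃ j', v i = b j' ∧ z i j' = 1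
        · have heq : ∀ ε, vε ε i = v i + ε := fun ε => (hvε ε i).1 hc
          have : Tendsto (fun ε : ℝ => v i + ε) (nhdsWithin 0 (Set.Ioi 0)) (nhds (v i)) := by
            have h2 : Tendsto (fun ε : ℝ => v i + ε) (nhds (0:ℝ)) (nhds (v i + 0)) :=
              (continuous_const.add continuous_id).tendsto (0 : ℝ)
            rw [add_zero] at h2
            exact h2.mono_left nhdsWithin_le_nhds
          exact this.congr (fun ε => (heq ε).symm)
        · have heq : ∀ ε, vε ε i = v i := fun ε => (hvε ε i).2 (not_exists.mp hc)
          exact tendsto_const_nhds.congr (fun ε => (heq ε).symm)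
      exact h1'.prodMk_nhds tendsto_const_nhds
  refine ⟨?_, key⟩
  apply le_antisymm
  · -- closure V ⊆ V̄ : V̄ closed and V ⊆ V̄
    apply closure_minimal
    · rintro ⟨v, z⟩ h
      refine ⟨fun i j => ?_, fun i j => ?_⟩
      · show z i j = 0 ∨ z i j = 1
        have hj : z i j = if b j < v i then 1 else 0 := h i j
        rw [hj]; split <;> simp
      · show 0 ≤ (v i - b j) * z i j ∧ (v i - b j) * (1 - z i j) ≤ 0
        have hj : z i j = if b j < v i then 1 else 0 := h i j
        rw [hj]
        by_cases hlt : b j < v i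
        · rw [if_pos hlt]; constructor <;> nlinarith
        · rw [if_neg hlt]; push_neg at hlt; constructor <;> nlinarith
    · -- V̄ is closed
      have : {vz : (Fin m → ℝ) × (Fin m → Fin ℓ → ℝ) |
          (∀ i j, vz.2 i j = 0 ∨ vz.2 i j = 1) ∧
          ∀ i j, 0 ≤ (vz.1 i - b j) * vz.2 i j ∧ (vz.1 i - b j) * (1 - vz.2 i j) ≤ 0} =
          (⋂ i, ⋂ j, ({vz : (Fin m → ℝ) × (Fin m → Fin ℓ → ℝ) | vz.2 i j = 0} ∪
            {vz | vz.2 i j = 1})) ∩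
          (⋂ i, ⋂ j, ({vz : (Fin m → ℝ) × (Fin m → Fin ℓ → ℝ) |
              0 ≤ (vz.1 i - b j) * vz.2 i j} ∩
            {vz | (vz.1 i - b j) * (1 - vz.2 i j) ≤ 0})) := by
        ext vz
        simp only [Set.mem_setOf_eq, Set.mem_inter_iff, Set.mem_iInter, Set.mem_union]
      rw [this]
      have hcv : ∀ i : Fin m, Continuous
          (fun vz : (Fin m → ℝ) × (Fin m → Fin ℓ → ℝ) => vz.1 i) := by
        intro i; exact (continuous_apply i).comp continuous_fst
      have hcz : ∀ (i : Fin m) (j : Fin ℓ), Continuous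
          (fun vz : (Fin m → ℝ) × (Fin m → Fin ℓ → ℝ) => vz.2 i j) := by
        intro i j
        exact (continuous_apply j).comp ((continuous_apply i).comp continuous_snd)
      apply IsClosed.inter
      · exact isClosed_iInter fun i => isClosed_iInter fun j =>
          ((isClosed_eq (hcz i j) continuous_const).union
            (isClosed_eq (hcz i j) continuous_const))
      · exact isClosed_iInter fun i => isClosed_iInter fun j =>
          ((isClosed_le continuous_const (((hcv i).sub continuous_const).mul (hcz i j))).inter
            (isClosed_le (((hcv i).sub continuous_const).mul
              (continuous_const.sub (hcz i j))) continuous_const))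
  · -- V̄ ⊆ closure V
    rintro ⟨v, z⟩ hvz
    set vε : ℝ → Fin m → ℝ := fun ε i =>
      if ∃ j, v i = b j ∧ z i j = 1 then v i + ε else v i with hvεdef
    have hvεprop : ∀ ε i, ((∃ j, v i = b j ∧ z i j = 1) → vε ε i = v i + ε) ∧
        ((∀ j, ¬(v i = b j ∧ z i j = 1)) → vε ε i = v i) := by
      intro ε i
      constructor
      · intro h; simp [hvεdef, if_pos h]
      · intro h; simp [hvεdef, if_neg (not_exists.mpr h)]
    obtain ⟨⟨ε₀, hε₀, hmem⟩, htend⟩ := key (v, z) hvz vε hvεprop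
    exact mem_closure_of_tendsto htend
      (eventually_of_mem (Ioo_mem_nhdsGT_of_mem ⟨le_refl 0, hε₀⟩)
        (fun ε hε => hmem ε hε.1 hε.2))
end

section
/- For every v ∈ ℝ, the point (v, 0) (with all binary coordinates equal to zero) belongs to the closed convex hull of Ū. Specifically, if v ≤ b_1 then (v, 0) ∈ Ū, and otherwise (v, 0) = lim_{λ→0+} (1−λ)(b_1, 0) + λ(b_ℓ + (v − b_1)/λ, 1), where both (b_1, 0) ∈ Ū and (b_ℓ + (v − b_1)/λ, 1) ∈ Ū for all λ ∈ (0,1). -/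
/-- The single-row set `Ū = {(v, z) ∈ ℝ × {0,1}^ℓ :
(v − bⱼ) zⱼ ≥ 0, (v − bⱼ)(1 − zⱼ) ≤ 0 ∀ j}`. -/
def Ubar (ℓ : ℕ) (b : Fin ℓ → ℝ) : Set (ℝ × (Fin ℓ → ℝ)) :=
  {uz | (∀ j, uz.2 j = 0 ∨ uz.2 j = 1) ∧
    ∀ j, 0 ≤ (uz.1 - b j) * uz.2 j ∧ (uz.1 - b j) * (1 - uz.2 j) ≤ 0}

/-- For every `v ∈ ℝ`, the point `(v, 0)` belongs to `cl conv(Ū)`.  Specifically, if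
`v ≤ b₁` then `(v, 0) ∈ Ū`; otherwise `(v, 0) = lim_{λ→0⁺} (1−λ)(b₁, 0) +
λ(b_ℓ + (v − b₁)/λ, 𝟙)`, where `(b₁, 0) ∈ Ū` and `(b_ℓ + (v − b₁)/λ, 𝟙) ∈ Ū`
for all `λ ∈ (0,1)`. -/
theorem stmt3 (ℓ : ℕ) (hℓ : 1 ≤ ℓ) (b : Fin ℓ → ℝ) (hb : StrictMono b) (v : ℝ) :
    (v, (0 : Fin ℓ → ℝ)) ∈ closure (convexHull ℝ (Ubar ℓ b)) ∧
    (v ≤ b ⟨0, hℓ⟩ → (v, (0 : Fin ℓ → ℝ)) ∈ Ubar ℓ b) ∧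
    (b ⟨0, hℓ⟩ < v →
      Filter.Tendsto (fun lam : ℝ =>
          (1 - lam) • ((b ⟨0, hℓ⟩, (0 : Fin ℓ → ℝ)) : ℝ × (Fin ℓ → ℝ)) +
            lam • ((b ⟨ℓ - 1, Nat.sub_lt hℓ Nat.one_pos⟩ + (v - b ⟨0, hℓ⟩) / lam,
              fun _ => (1 : ℝ)) : ℝ × (Fin ℓ → ℝ)))
        (nhdsWithin 0 (Set.Ioi 0)) (nhds (v, (0 : Fin ℓ → ℝ))) ∧
      (b ⟨0, hℓ⟩, (0 : Fin ℓ → ℝ)) ∈ Ubar ℓ b ∧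
      ∀ lam ∈ Set.Ioo (0 : ℝ) 1,
        ((b ⟨ℓ - 1, Nat.sub_lt hℓ Nat.one_pos⟩ + (v - b ⟨0, hℓ⟩) / lam,
          fun _ => (1 : ℝ)) : ℝ × (Fin ℓ → ℝ)) ∈ Ubar ℓ b) := by
  set i0 : Fin ℓ := ⟨0, hℓ⟩ with hi0
  set il : Fin ℓ := ⟨ℓ - 1, Nat.sub_lt hℓ Nat.one_pos⟩ with hil
  have hb0 : ∀ j : Fin ℓ, b i0 ≤ b j := fun j =>
    hb.monotone (by simp [hi0, Fin.le_def])
  have hbl : ∀ j : Fin ℓ, b j ≤ b il := fun j =>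
    hb.monotone (by have := j.isLt; simp [hil, Fin.le_def]; omega)
  -- membership of "low" points
  have hmem0 : ∀ u : ℝ, u ≤ b i0 → (u, (0 : Fin ℓ → ℝ)) ∈ Ubar ℓ b := by
    intro u hu
    refine ⟨fun j => Or.inl rfl, fun j => ⟨by simp, ?_⟩⟩
    have := hb0 j
    simp only [Pi.zero_apply]
    nlinarith
  -- membership of "high" points
  have hmem1 : ∀ u : ℝ, b il ≤ u →
      ((u, fun _ => (1 : ℝ)) : ℝ × (Fin ℓ → ℝ)) ∈ Ubar ℓ b := by
    intro u hu
    refine ⟨fun j => Or.inr rfl, fun j => ⟨?_, by simp⟩⟩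
    have := hbl j
    simp only
    nlinarith
  have hmemhigh : b i0 < v → ∀ lam ∈ Set.Ioo (0 : ℝ) 1,
      ((b il + (v - b i0) / lam, fun _ => (1 : ℝ)) : ℝ × (Fin ℓ → ℝ)) ∈ Ubar ℓ b := by
    intro hv lam hlam
    apply hmem1
    have : 0 < (v - b i0) / lam := div_pos (by linarith) hlam.1
    linarith
  -- the limit statement
  have htend : b i0 < v →
      Filter.Tendsto (fun lam : ℝ =>
          (1 - lam) • ((b i0, (0 : Fin ℓ → ℝ)) : ℝ × (Fin ℓ → ℝ)) +
            lam • ((b il + (v - b i0) / lam, fun _ => (1 : ℝ)) : ℝ × (Fin ℓ → ℝ)))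
        (nhdsWithin 0 (Set.Ioi 0)) (nhds (v, (0 : Fin ℓ → ℝ))) := by
    intro _
    have hg : Filter.Tendsto (fun lam : ℝ =>
        (((1 - lam) * b i0 + lam * b il + (v - b i0), fun _ : Fin ℓ => lam) :
          ℝ × (Fin ℓ → ℝ))) (nhdsWithin 0 (Set.Ioi 0)) (nhds (v, (0 : Fin ℓ → ℝ))) := by
      have hc : Continuous (fun lam : ℝ =>
          (((1 - lam) * b i0 + lam * b il + (v - b i0), fun _ : Fin ℓ => lam) :
            ℝ × (Fin ℓ → ℝ))) := by
        apply Continuous.prodMk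
        · fun_prop
        · exact continuous_pi fun _ => continuous_id
      have h2 := (hc.tendsto 0).mono_left
        (nhdsWithin_le_nhds : nhdsWithin (0:ℝ) (Set.Ioi 0) ≤ nhds 0)
      have heq : (((1 - (0:ℝ)) * b i0 + 0 * b il + (v - b i0), fun _ : Fin ℓ => (0:ℝ))
          : ℝ × (Fin ℓ → ℝ)) = (v, 0) := Prod.ext (by ring) rfl
      rwa [heq] at h2
    refine hg.congr' ?_
    filter_upwards [self_mem_nhdsWithin] with lam hlam
    have hne : lam ≠ 0 := ne_of_gt hlam
    refine Prod.ext ?_ (funext fun j => ?_)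
    · simp only [Prod.fst_add, Prod.smul_fst, smul_eq_mul]
      field_simp
      ring
    · simp [Pi.add_apply, Pi.smul_apply, smul_eq_mul]
  -- closure membership
  have hclos : (v, (0 : Fin ℓ → ℝ)) ∈ closure (convexHull ℝ (Ubar ℓ b)) := by
    rcases le_or_gt v (b i0) with hv | hv
    · exact subset_closure (subset_convexHull ℝ _ (hmem0 v hv))
    · refine mem_closure_of_tendsto (htend hv) ?_
      filter_upwards [Ioo_mem_nhdsGT_of_mem (by norm_num : (0:ℝ) ∈ Set.Ico (0:ℝ) 1)]
        with lam hlam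
      exact (convex_convexHull ℝ (Ubar ℓ b))
        (subset_convexHull ℝ _ (hmem0 (b i0) le_rfl))
        (subset_convexHull ℝ _ (hmemhigh hv lam hlam))
        (by linarith [hlam.2]) (le_of_lt hlam.1) (by ring)
  exact ⟨hclos, hmem0 v, fun hv => ⟨htend hv, hmem0 (b i0) le_rfl, hmemhigh hv⟩⟩
end

section
/- Every point (v, z) ∈ ℝ × [0,1]^ℓ whose fractional coordinates are monotone nonincreasing (z_{j+1} ≤ z_j for all j ∈ [ℓ−1]) belongs to the closed convex hull of Ū: it is the limit as λ → 0+ of the convex combination (1−λ)[ z_ℓ (b_ℓ, 1) + Σ_{j=1}^{ℓ−1} u_j (b_j, Σ_{i=1}^j e_i) ] + λ ( v/λ − ((1−λ)/λ)[ z_ℓ b_ℓ + Σ_{j=1}^{ℓ−1} u_j b_j ], 0 ), where u_j = z_j − z_{j+1} ≥ 0, and all points appearing in the combination belong to Ū (the representation is a convex combination after normalizing the weights z_ℓ, u_1, ..., u_{ℓ−1}, and 1 − z_1 which sum appropriately). -/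
lemma tel_aux (f : ℕ → ℝ) {a b : ℕ} (h : a ≤ b) :
    ∑ k ∈ Finset.Ico a b, (f k - f (k+1)) = f a - f b := by
  induction b, h using Nat.le_induction with
  | base => simp
  | succ n hn ih => rw [Finset.sum_Ico_succ_top hn, ih]; ring

lemma tel_ind (f : ℕ → ℝ) (n r : ℕ) (hr : r ≤ n) :
    ∑ k ∈ Finset.range n, (f k - f (k+1)) * (if r ≤ k then (1:ℝ) else 0) = f r - f n := by
  have h1 : ∑ k ∈ Finset.Ico 0 r, (f k - f (k+1)) * (if r ≤ k then (1:ℝ) else 0) = 0 :=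
    Finset.sum_eq_zero fun k hk => by
      rw [Finset.mem_Ico] at hk; rw [if_neg (by omega), mul_zero]
  have h2 : ∑ k ∈ Finset.Ico r n, (f k - f (k+1)) * (if r ≤ k then (1:ℝ) else 0)
      = f r - f n := by
    rw [show (∑ k ∈ Finset.Ico r n, (f k - f (k+1)) * (if r ≤ k then (1:ℝ) else 0))
        = ∑ k ∈ Finset.Ico r n, (f k - f (k+1)) from
      Finset.sum_congr rfl fun k hk => by
        rw [Finset.mem_Ico] at hk; rw [if_pos hk.1, mul_one]]
    exact tel_aux f hr
  rw [Finset.range_eq_Ico, ← Finset.sum_Ico_consecutive _ (Nat.zero_le r) hr, h1, h2, zero_add]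

lemma zero_snd_mem (ℓ : ℕ) (hℓ : 0 < ℓ) (b : Fin ℓ → ℝ) (hb : StrictMono b) (x : ℝ) :
    ((x, (0 : Fin ℓ → ℝ)) : ℝ × (Fin ℓ → ℝ)) ∈ closure (convexHull ℝ (Ubar ℓ b)) := by
  set b0 := b ⟨0, hℓ⟩ with hb0
  set bl := b ⟨ℓ-1, Nat.sub_lt hℓ Nat.one_pos⟩ with hbl
  have hble : ∀ j : Fin ℓ, b0 ≤ b j := fun j => hb.monotone (Fin.le_def.mpr (Nat.zero_le _))
  have hjle : ∀ j : Fin ℓ, b j ≤ bl := fun j =>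
    hb.monotone (Fin.le_def.mpr (by simpa using Nat.le_sub_one_of_lt j.isLt))
  by_cases hx : x ≤ b0
  · apply subset_closure
    apply subset_convexHull
    refine ⟨fun j => Or.inl rfl, fun j => ⟨by simp, ?_⟩⟩
    have := hble j
    simp only [Pi.zero_apply, sub_zero, mul_one]
    linarith
  · push_neg at hx
    set δ : ℝ := (x - b0) / (bl - b0 + 1) with hδ
    have hblb0 : b0 ≤ bl := hble _
    have hδpos : 0 < δ := div_pos (by linarith) (by linarith)
    set f : ℝ → ℝ × (Fin ℓ → ℝ) := fun μ =>
      (1-μ) • ((b0, (0:Fin ℓ → ℝ)) : ℝ × (Fin ℓ → ℝ)) +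
        μ • ((b0 + (x - b0)/μ, fun _ => (1:ℝ)) : ℝ × (Fin ℓ → ℝ)) with hf
    have hfeq : ∀ μ ∈ Set.Ioi (0:ℝ), f μ = (x, fun _ => μ) := by
      intro μ hμ
      have hμ0 : μ ≠ 0 := ne_of_gt hμ
      simp only [hf, Prod.smul_mk, Prod.mk_add_mk, smul_eq_mul]
      refine Prod.ext ?_ ?_
      · show (1-μ) * b0 + μ * (b0 + (x - b0)/μ) = x
        field_simp
        ring
      · funext r
        show (1-μ) • (0:ℝ) + μ • (1:ℝ) = μ
        simp
    have hcont : Continuous (fun μ : ℝ => ((x, fun _ : Fin ℓ => μ) : ℝ × (Fin ℓ → ℝ))) := by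
      continuity
    have htend0 : Filter.Tendsto (fun μ : ℝ => ((x, fun _ : Fin ℓ => μ) : ℝ × (Fin ℓ → ℝ)))
        (nhdsWithin 0 (Set.Ioi 0)) (nhds ((x, (0 : Fin ℓ → ℝ)))) :=
      (hcont.tendsto' 0 _ rfl).mono_left nhdsWithin_le_nhds
    have htend : Filter.Tendsto f (nhdsWithin 0 (Set.Ioi 0))
        (nhds ((x, (0 : Fin ℓ → ℝ)))) := by
      refine htend0.congr' ?_
      filter_upwards [self_mem_nhdsWithin] with μ hμ
      exact (hfeq μ hμ).symm
    refine mem_closure_of_tendsto htend ?_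
    filter_upwards [Ioc_mem_nhdsGT_of_mem (Set.mem_Ico.mpr ⟨le_refl 0, lt_min hδpos one_pos⟩)]
      with μ hμ
    obtain ⟨hμ0, hμδ⟩ := hμ
    have hμδ' : μ ≤ δ := le_trans hμδ (min_le_left _ _)
    have hμ1 : μ ≤ 1 := le_trans hμδ (min_le_right _ _)
    have mem1 : ((b0, (0:Fin ℓ → ℝ)) : ℝ × (Fin ℓ → ℝ)) ∈ convexHull ℝ (Ubar ℓ b) := by
      apply subset_convexHull
      refine ⟨fun j => Or.inl rfl, fun j => ⟨by simp, ?_⟩⟩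
      have := hble j
      simp only [Pi.zero_apply, sub_zero, mul_one]
      linarith
    have mem2 : ((b0 + (x - b0)/μ, fun _ => (1:ℝ)) : ℝ × (Fin ℓ → ℝ)) ∈
        convexHull ℝ (Ubar ℓ b) := by
      apply subset_convexHull
      refine ⟨fun j => Or.inr rfl, fun j => ⟨?_, by simp⟩⟩
      have hdd : (x - b0)/δ ≤ (x - b0)/μ :=
        div_le_div_of_nonneg_left (by linarith) hμ0 hμδ'
      have hdval : (x - b0)/δ = bl - b0 + 1 := by
        rw [hδ]; field_simp
      have := hjle j
      simp only [mul_one]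
      rw [hdval] at hdd
      linarith
    exact (convex_convexHull ℝ (Ubar ℓ b)) mem1 mem2 (by linarith) (le_of_lt hμ0) (by ring)

/-- Every `(v, z) ∈ ℝ × [0,1]^ℓ` with `z_{j+1} ≤ z_j` belongs to `cl conv(Ū)`: it is the
limit as `λ → 0⁺` of the combination
`(1−λ)[z_ℓ (b_ℓ, 𝟙) + Σ_{j=1}^{ℓ−1} u_j (b_j, Σ_{i≤j} e_i)] + λ (v/λ − ((1−λ)/λ)[z_ℓ b_ℓ
+ Σ u_j b_j], 0)` with `u_j = z_j − z_{j+1} ≥ 0`; the points `(b_ℓ, 𝟙)` and `(b_j, 𝟙_j)`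
belong to `Ū`, and the remaining point of the combination belongs to `cl conv(Ū)`. -/
theorem stmt4 (ℓ : ℕ) (hℓ : 1 ≤ ℓ) (b : Fin ℓ → ℝ) (hb : StrictMono b)
    (v : ℝ) (z : Fin ℓ → ℝ) (hz01 : ∀ j, z j ∈ Set.Icc (0 : ℝ) 1)
    (hmono : ∀ j : Fin ℓ, ∀ h : (j : ℕ) + 1 < ℓ, z ⟨(j : ℕ) + 1, h⟩ ≤ z j) :
    (v, z) ∈ closure (convexHull ℝ (Ubar ℓ b)) ∧
    Filter.Tendsto (fun lam : ℝ =>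
        ((1 - lam) •
          (z ⟨ℓ - 1, Nat.sub_lt hℓ Nat.one_pos⟩ •
              ((b ⟨ℓ - 1, Nat.sub_lt hℓ Nat.one_pos⟩, fun _ => (1 : ℝ)) : ℝ × (Fin ℓ → ℝ)) +
            ∑ k : Fin (ℓ - 1),
              (z ⟨(k : ℕ), Nat.lt_of_lt_of_le k.isLt (Nat.sub_le ℓ 1)⟩ -
                  z ⟨(k : ℕ) + 1, Nat.add_lt_of_lt_sub k.isLt⟩) •
                ((b ⟨(k : ℕ), Nat.lt_of_lt_of_le k.isLt (Nat.sub_le ℓ 1)⟩,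
                  fun r : Fin ℓ => if (r : ℕ) ≤ (k : ℕ) then (1 : ℝ) else 0) :
                  ℝ × (Fin ℓ → ℝ))) +
          lam •
            ((v / lam - ((1 - lam) / lam) *
                (z ⟨ℓ - 1, Nat.sub_lt hℓ Nat.one_pos⟩ * b ⟨ℓ - 1, Nat.sub_lt hℓ Nat.one_pos⟩ +
                  ∑ k : Fin (ℓ - 1),
                    (z ⟨(k : ℕ), Nat.lt_of_lt_of_le k.isLt (Nat.sub_le ℓ 1)⟩ -
                        z ⟨(k : ℕ) + 1, Nat.add_lt_of_lt_sub k.isLt⟩) *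
                      b ⟨(k : ℕ), Nat.lt_of_lt_of_le k.isLt (Nat.sub_le ℓ 1)⟩),
              (0 : Fin ℓ → ℝ)) : ℝ × (Fin ℓ → ℝ))))
      (nhdsWithin 0 (Set.Ioi 0)) (nhds (v, z)) ∧
    ((b ⟨ℓ - 1, Nat.sub_lt hℓ Nat.one_pos⟩, fun _ => (1 : ℝ)) : ℝ × (Fin ℓ → ℝ)) ∈ Ubar ℓ b ∧
    (∀ k : Fin (ℓ - 1),
      ((b ⟨(k : ℕ), Nat.lt_of_lt_of_le k.isLt (Nat.sub_le ℓ 1)⟩,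
        fun r : Fin ℓ => if (r : ℕ) ≤ (k : ℕ) then (1 : ℝ) else 0) : ℝ × (Fin ℓ → ℝ)) ∈
        Ubar ℓ b) ∧
    (∀ lam ∈ Set.Ioo (0 : ℝ) 1,
      ((v / lam - ((1 - lam) / lam) *
          (z ⟨ℓ - 1, Nat.sub_lt hℓ Nat.one_pos⟩ * b ⟨ℓ - 1, Nat.sub_lt hℓ Nat.one_pos⟩ +
            ∑ k : Fin (ℓ - 1),
              (z ⟨(k : ℕ), Nat.lt_of_lt_of_le k.isLt (Nat.sub_le ℓ 1)⟩ -
                  z ⟨(k : ℕ) + 1, Nat.add_lt_of_lt_sub k.isLt⟩) *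
                b ⟨(k : ℕ), Nat.lt_of_lt_of_le k.isLt (Nat.sub_le ℓ 1)⟩),
        (0 : Fin ℓ → ℝ)) : ℝ × (Fin ℓ → ℝ)) ∈ closure (convexHull ℝ (Ubar ℓ b))) := by
  classical
  have hℓ0 : 0 < ℓ := hℓ
  -- extension of z and b to ℕ
  set g : ℕ → ℝ := fun n => if h : n < ℓ then z ⟨n, h⟩ else 0 with hgdef
  have hg : ∀ (n : ℕ) (h : n < ℓ), z ⟨n, h⟩ = g n := fun n h => by
    rw [hgdef]; simp [h]
  -- abbreviate the scalar sum and the point combination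
  set Bsum : ℝ := z ⟨ℓ - 1, Nat.sub_lt hℓ Nat.one_pos⟩ * b ⟨ℓ - 1, Nat.sub_lt hℓ Nat.one_pos⟩ +
      ∑ k : Fin (ℓ - 1),
        (z ⟨(k : ℕ), Nat.lt_of_lt_of_le k.isLt (Nat.sub_le ℓ 1)⟩ -
            z ⟨(k : ℕ) + 1, Nat.add_lt_of_lt_sub k.isLt⟩) *
          b ⟨(k : ℕ), Nat.lt_of_lt_of_le k.isLt (Nat.sub_le ℓ 1)⟩ with hBsum
  set A : ℝ × (Fin ℓ → ℝ) := z ⟨ℓ - 1, Nat.sub_lt hℓ Nat.one_pos⟩ •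
      ((b ⟨ℓ - 1, Nat.sub_lt hℓ Nat.one_pos⟩, fun _ => (1 : ℝ)) : ℝ × (Fin ℓ → ℝ)) +
    ∑ k : Fin (ℓ - 1),
      (z ⟨(k : ℕ), Nat.lt_of_lt_of_le k.isLt (Nat.sub_le ℓ 1)⟩ -
          z ⟨(k : ℕ) + 1, Nat.add_lt_of_lt_sub k.isLt⟩) •
        ((b ⟨(k : ℕ), Nat.lt_of_lt_of_le k.isLt (Nat.sub_le ℓ 1)⟩,
          fun r : Fin ℓ => if (r : ℕ) ≤ (k : ℕ) then (1 : ℝ) else 0) :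
          ℝ × (Fin ℓ → ℝ)) with hA
  -- telescoping for the coordinate functions
  have hsumChi : ∀ r : Fin ℓ,
      (∑ k : Fin (ℓ - 1),
        (z ⟨(k : ℕ), Nat.lt_of_lt_of_le k.isLt (Nat.sub_le ℓ 1)⟩ -
            z ⟨(k : ℕ) + 1, Nat.add_lt_of_lt_sub k.isLt⟩) *
          (if (r : ℕ) ≤ (k : ℕ) then (1:ℝ) else 0)) = z r - g (ℓ - 1) := by
    intro r
    have e1 : (∑ k : Fin (ℓ - 1),
        (z ⟨(k : ℕ), Nat.lt_of_lt_of_le k.isLt (Nat.sub_le ℓ 1)⟩ -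
            z ⟨(k : ℕ) + 1, Nat.add_lt_of_lt_sub k.isLt⟩) *
          (if (r : ℕ) ≤ (k : ℕ) then (1:ℝ) else 0))
        = ∑ k ∈ Finset.range (ℓ - 1), (g k - g (k+1)) * (if (r : ℕ) ≤ k then (1:ℝ) else 0) := by
      rw [← Fin.sum_univ_eq_sum_range
        (fun k => (g k - g (k+1)) * (if (r : ℕ) ≤ k then (1:ℝ) else 0)) (ℓ - 1)]
      exact Finset.sum_congr rfl fun k _ => by rw [hg, hg]
    have hgr : g (r : ℕ) = z r := by rw [← hg _ r.isLt]
    rw [e1, tel_ind g (ℓ - 1) r (by have := r.isLt; omega), hgr]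
  have hA2 : ∀ r : Fin ℓ, A.2 r = z r := by
    intro r
    rw [hA]
    simp only [Prod.snd_add, Prod.smul_snd, Prod.snd_sum, Pi.add_apply, Pi.smul_apply,
      Finset.sum_apply, smul_eq_mul]
    rw [hsumChi r, hg (ℓ - 1) (Nat.sub_lt hℓ Nat.one_pos)]
    ring
  have hA1 : A.1 = Bsum := by
    rw [hA, hBsum]
    simp only [Prod.fst_add, Prod.smul_fst, Prod.fst_sum, smul_eq_mul]
  -- membership of the vertices
  have hm3 : ((b ⟨ℓ - 1, Nat.sub_lt hℓ Nat.one_pos⟩, fun _ => (1 : ℝ)) : ℝ × (Fin ℓ → ℝ)) ∈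
      Ubar ℓ b := by
    refine ⟨fun j => Or.inr rfl, fun j => ⟨?_, by simp⟩⟩
    have : b j ≤ b ⟨ℓ - 1, Nat.sub_lt hℓ Nat.one_pos⟩ :=
      hb.monotone (Fin.le_def.mpr (by simpa using Nat.le_sub_one_of_lt j.isLt))
    simp only [mul_one]
    linarith
  have hm4 : ∀ k : Fin (ℓ - 1),
      ((b ⟨(k : ℕ), Nat.lt_of_lt_of_le k.isLt (Nat.sub_le ℓ 1)⟩,
        fun r : Fin ℓ => if (r : ℕ) ≤ (k : ℕ) then (1 : ℝ) else 0) : ℝ × (Fin ℓ → ℝ)) ∈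
        Ubar ℓ b := by
    intro k
    refine ⟨fun j => ?_, fun j => ⟨?_, ?_⟩⟩
    · by_cases h : (j : ℕ) ≤ (k : ℕ) <;> simp [h]
    · by_cases h : (j : ℕ) ≤ (k : ℕ)
      · have : b j ≤ b ⟨(k : ℕ), Nat.lt_of_lt_of_le k.isLt (Nat.sub_le ℓ 1)⟩ :=
          hb.monotone (Fin.le_def.mpr h)
        simp only [if_pos h, mul_one]
        linarith
      · simp [if_neg h]
    · by_cases h : (j : ℕ) ≤ (k : ℕ)
      · simp [if_pos h]
      · have : b ⟨(k : ℕ), Nat.lt_of_lt_of_le k.isLt (Nat.sub_le ℓ 1)⟩ ≤ b j :=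
          hb.monotone (Fin.le_def.mpr (show (k:ℕ) ≤ (j:ℕ) by omega))
        simp only [if_neg h, sub_zero, mul_one]
        linarith
  set C := closure (convexHull ℝ (Ubar ℓ b)) with hC
  have hCconv : Convex ℝ C := (convex_convexHull ℝ (Ubar ℓ b)).closure
  have hUC : Ubar ℓ b ⊆ C := fun p hp => subset_closure (subset_convexHull ℝ _ hp)
  -- A is in C
  have hAmem : A ∈ C := by
    set W : Option (Option (Fin (ℓ - 1))) → ℝ := fun i =>
      i.elim (1 - z ⟨0, hℓ0⟩) (fun j => j.elim (z ⟨ℓ - 1, Nat.sub_lt hℓ Nat.one_pos⟩)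
        (fun k => z ⟨(k : ℕ), Nat.lt_of_lt_of_le k.isLt (Nat.sub_le ℓ 1)⟩ -
          z ⟨(k : ℕ) + 1, Nat.add_lt_of_lt_sub k.isLt⟩)) with hW
    set P : Option (Option (Fin (ℓ - 1))) → ℝ × (Fin ℓ → ℝ) := fun i =>
      i.elim (((0:ℝ), (0 : Fin ℓ → ℝ)) : ℝ × (Fin ℓ → ℝ))
        (fun j => j.elim ((b ⟨ℓ - 1, Nat.sub_lt hℓ Nat.one_pos⟩, fun _ => (1 : ℝ)))
          (fun k => ((b ⟨(k : ℕ), Nat.lt_of_lt_of_le k.isLt (Nat.sub_le ℓ 1)⟩,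
            fun r : Fin ℓ => if (r : ℕ) ≤ (k : ℕ) then (1 : ℝ) else 0)))) with hP
    have hsumU : (∑ k : Fin (ℓ - 1),
        (z ⟨(k : ℕ), Nat.lt_of_lt_of_le k.isLt (Nat.sub_le ℓ 1)⟩ -
          z ⟨(k : ℕ) + 1, Nat.add_lt_of_lt_sub k.isLt⟩)) = z ⟨0, hℓ0⟩ - g (ℓ - 1) := by
      have e1 : (∑ k : Fin (ℓ - 1),
          (z ⟨(k : ℕ), Nat.lt_of_lt_of_le k.isLt (Nat.sub_le ℓ 1)⟩ -
            z ⟨(k : ℕ) + 1, Nat.add_lt_of_lt_sub k.isLt⟩))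
          = ∑ k ∈ Finset.range (ℓ - 1), (g k - g (k+1)) := by
        rw [← Fin.sum_univ_eq_sum_range (fun k => (g k - g (k+1))) (ℓ - 1)]
        exact Finset.sum_congr rfl fun k _ => by rw [hg, hg]
      rw [e1, Finset.range_eq_Ico, tel_aux g (Nat.zero_le _), ← hg 0 hℓ0]
    have h0 : ∀ i ∈ (Finset.univ : Finset (Option (Option (Fin (ℓ - 1))))), 0 ≤ W i := by
      rintro (_ | _ | k) -
      · simp only [hW, Option.elim]
        have := (hz01 ⟨0, hℓ0⟩).2
        linarith
      · simp only [hW, Option.elim]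
        exact (hz01 _).1
      · simp only [hW, Option.elim]
        have := hmono ⟨(k : ℕ), Nat.lt_of_lt_of_le k.isLt (Nat.sub_le ℓ 1)⟩
          (Nat.add_lt_of_lt_sub k.isLt)
        simp only [sub_nonneg]
        exact this
    have h1 : ∑ i ∈ (Finset.univ : Finset (Option (Option (Fin (ℓ - 1))))), W i = 1 := by
      rw [Fintype.sum_option, Fintype.sum_option]
      simp only [hW, Option.elim]
      rw [hsumU, hg (ℓ - 1) (Nat.sub_lt hℓ Nat.one_pos)]
      ring
    have hmem : ∀ i ∈ (Finset.univ : Finset (Option (Option (Fin (ℓ - 1))))), P i ∈ C := by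
      rintro (_ | _ | k) -
      · exact zero_snd_mem ℓ hℓ0 b hb 0
      · exact hUC hm3
      · exact hUC (hm4 k)
    have := hCconv.sum_mem h0 h1 hmem
    rw [Fintype.sum_option, Fintype.sum_option] at this
    simp only [hW, hP, Option.elim] at this
    have hz0 : (1 - z ⟨0, hℓ0⟩) • (((0:ℝ), (0 : Fin ℓ → ℝ)) : ℝ × (Fin ℓ → ℝ)) = 0 := by
      simp [Prod.smul_mk]
    rw [hz0, zero_add] at this
    rw [hA]
    exact this
  -- the function equals the simple form on Ioi 0
  have hBIGeq : ∀ lam ∈ Set.Ioi (0:ℝ),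
      ((1 - lam) • A + lam •
        ((v / lam - ((1 - lam) / lam) * Bsum, (0 : Fin ℓ → ℝ)) : ℝ × (Fin ℓ → ℝ)))
      = ((v, fun r => (1 - lam) * z r) : ℝ × (Fin ℓ → ℝ)) := by
    intro lam hlam
    have h0 : lam ≠ 0 := ne_of_gt hlam
    refine Prod.ext ?_ ?_
    · simp only [Prod.fst_add, Prod.smul_fst, smul_eq_mul]
      rw [hA1]
      field_simp
      ring
    · funext r
      simp only [Prod.snd_add, Prod.smul_snd, Pi.add_apply, Pi.smul_apply, Pi.zero_apply,
        smul_eq_mul, mul_zero, add_zero]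
      rw [hA2 r]
  -- the tendsto statement
  have hcont2 : Continuous (fun lam : ℝ => ((v, fun r => (1 - lam) * z r) : ℝ × (Fin ℓ → ℝ))) := by
    apply Continuous.prodMk continuous_const
    exact continuous_pi fun r => (continuous_const.sub continuous_id).mul continuous_const
  have htendG : Filter.Tendsto (fun lam : ℝ => ((v, fun r => (1 - lam) * z r) : ℝ × (Fin ℓ → ℝ)))
      (nhdsWithin 0 (Set.Ioi 0)) (nhds (v, z)) := by
    refine (hcont2.tendsto' 0 _ ?_).mono_left nhdsWithin_le_nhds
    refine Prod.ext rfl ?_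
    funext r
    show (1 - 0) * z r = z r
    ring
  have htendBIG : Filter.Tendsto (fun lam : ℝ =>
      ((1 - lam) • A + lam •
        ((v / lam - ((1 - lam) / lam) * Bsum, (0 : Fin ℓ → ℝ)) : ℝ × (Fin ℓ → ℝ))))
      (nhdsWithin 0 (Set.Ioi 0)) (nhds (v, z)) := by
    refine htendG.congr' ?_
    filter_upwards [self_mem_nhdsWithin] with lam hlam
    exact (hBIGeq lam hlam).symm
  have hmemBIG : ∀ᶠ lam in nhdsWithin 0 (Set.Ioi 0),
      ((1 - lam) • A + lam •
        ((v / lam - ((1 - lam) / lam) * Bsum, (0 : Fin ℓ → ℝ)) : ℝ × (Fin ℓ → ℝ))) ∈ C := by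
    filter_upwards [Ioc_mem_nhdsGT_of_mem (Set.mem_Ico.mpr ⟨le_refl 0, one_pos⟩)] with lam hlam
    exact hCconv hAmem (zero_snd_mem ℓ hℓ0 b hb _) (by linarith [hlam.2]) (le_of_lt hlam.1)
      (by ring)
  have hmainmem : (v, z) ∈ C := by
    have := mem_closure_of_tendsto htendBIG hmemBIG
    rwa [hC, closure_closure] at this
  exact ⟨hmainmem, htendBIG, hm3, hm4, fun lam _ => zero_snd_mem ℓ hℓ0 b hb _⟩
end

section
/- The closed convex hull of Ū is exactly {(v, z) ∈ ℝ × [0,1]^ℓ : z_{j+1} ≤ z_j for all j ∈ [ℓ−1]}. -/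
lemma key_mem (ℓ : ℕ) (hℓ : 1 ≤ ℓ) (b : Fin ℓ → ℝ) (hb : StrictMono b)
    (v : ℝ) (z : Fin ℓ → ℝ) (h0 : ∀ j, 0 < z j) (h1 : ∀ j, z j < 1)
    (hdec : ∀ j : Fin ℓ, ∀ h : (j : ℕ) + 1 < ℓ, z ⟨(j : ℕ) + 1, h⟩ < z j) :
    (v, z) ∈ convexHull ℝ (Ubar ℓ b) := by
  classical
  set A : ℕ → ℝ := fun k => if k = 0 then 1 else if h : k - 1 < ℓ then z ⟨k - 1, h⟩ else 0
    with hA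
  set lam : ℕ → ℝ := fun k => A k - A (k + 1) with hlam
  set W : ℕ → ℝ := fun k => if h : k < ℓ then b ⟨k, h⟩ else b ⟨ℓ - 1, by omega⟩ with hW
  have hA0 : A 0 = 1 := by simp [hA]
  have hAs : ∀ k (h : k < ℓ), A (k + 1) = z ⟨k, h⟩ := by
    intro k h; simp [hA, h]
  have hAtop : ∀ k, ℓ ≤ k → A (k + 1) = 0 := by
    intro k hk; simp only [hA]
    rw [if_neg (by omega), dif_neg (by omega)]
  have hlam0 : 0 < lam 0 := by
    have := h1 ⟨0, by omega⟩
    simp [hlam, hA0, hAs 0 (by omega)]; linarith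
  have hlamtop : 0 < lam ℓ := by
    have h := h0 ⟨ℓ - 1, by omega⟩
    have e1 : A ℓ = z ⟨ℓ - 1, by omega⟩ := by
      have := hAs (ℓ - 1) (by omega)
      convert this using 2; omega
    simp [hlam, e1, hAtop ℓ le_rfl]; linarith
  have hlam_nonneg : ∀ k, k ≤ ℓ → 0 ≤ lam k := by
    intro k hk
    match k with
    | 0 => exact hlam0.le
    | (m + 1) =>
      by_cases h : m + 1 < ℓ
      · have e1 := hAs m (by omega)
        have e2 := hAs (m + 1) h
        have := hdec ⟨m, by omega⟩ h
        simp only [hlam, e1, e2]; linarith [this]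
      · have hmℓ : m + 1 = ℓ := by omega
        have e1 := hAs m (by omega)
        have e2 := hAtop (m + 1) (by omega)
        have := h0 ⟨m, by omega⟩
        simp only [hlam, e1, e2]; linarith
  set S : ℝ := ∑ k ∈ Finset.range (ℓ + 1), lam k * W k with hS
  set D : ℝ := v - S with hD
  set V : ℕ → ℝ := fun k =>
    if k = 0 then W 0 + min 0 D / lam 0 else if k = ℓ then W ℓ + max 0 D / lam ℓ else W k
    with hV
  set p : Fin (ℓ + 1) → ℝ × (Fin ℓ → ℝ) :=
    fun k => (V k, fun j => if (j : ℕ) < (k : ℕ) then 1 else 0) with hp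
  -- bounds on V
  have hVge : ∀ k : ℕ, k ≤ ℓ → ∀ j : Fin ℓ, (j : ℕ) < k → b j ≤ V k := by
    intro k hk j hj
    have hk0 : k ≠ 0 := by omega
    by_cases hkl : k = ℓ
    · have hWl : W ℓ = b ⟨ℓ - 1, by omega⟩ := by simp [hW]
      have h1 : b j ≤ b ⟨ℓ - 1, by omega⟩ := by
        apply hb.monotone; rw [Fin.le_def]; have := j.isLt; simp; omega
      have h2 : 0 ≤ max 0 D / lam ℓ := div_nonneg (le_max_left 0 D) hlamtop.le
      rw [hkl]
      simp only [hV, if_neg (show ℓ ≠ 0 by omega), if_pos rfl, if_true, hWl]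
      linarith
    · have hkℓ : k < ℓ := by omega
      have : V k = b ⟨k, hkℓ⟩ := by simp [hV, hk0, hkl, hW, hkℓ]
      rw [this]
      exact hb.monotone (by simp [Fin.le_def]; omega)
  have hVle : ∀ k : ℕ, ∀ j : Fin ℓ, k ≤ (j : ℕ) → V k ≤ b j := by
    intro k j hj
    have hkℓ : k < ℓ := lt_of_le_of_lt hj j.isLt
    by_cases hk0 : k = 0
    · subst hk0
      have hW0 : W 0 = b ⟨0, by omega⟩ := by simp [hW, show 0 < ℓ by omega]
      have h1 : b ⟨0, by omega⟩ ≤ b j := hb.monotone (by simp [Fin.le_def])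
      have h2 : min 0 D / lam 0 ≤ 0 := div_nonpos_of_nonpos_of_nonneg (min_le_left 0 D) hlam0.le
      simp only [hV, if_pos rfl, hW0]
      linarith
    · have : V k = b ⟨k, hkℓ⟩ := by simp [hV, hk0, show k ≠ ℓ by omega, hW, hkℓ]
      rw [this]
      exact hb.monotone (by simp [Fin.le_def]; omega)
  have hpU : ∀ k : Fin (ℓ + 1), p k ∈ Ubar ℓ b := by
    intro k
    constructor
    · intro j; by_cases h : (j : ℕ) < (k : ℕ) <;> simp [hp, h]
    · intro j
      by_cases h : (j : ℕ) < (k : ℕ)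
      · have := hVge k (by omega) j h
        simp only [hp, if_pos h]
        constructor <;> nlinarith
      · have := hVle k j (by omega)
        simp only [hp, if_neg h]
        constructor <;> nlinarith
  -- sums
  have hsum1 : ∑ k : Fin (ℓ + 1), lam (k : ℕ) = 1 := by
    rw [Fin.sum_univ_eq_sum_range (fun k => lam k)]
    simp only [hlam]
    rw [Finset.sum_range_sub' A (ℓ + 1), hA0, hAtop ℓ le_rfl]
    ring
  have hzsum : ∀ j : Fin ℓ,
      ∑ k : Fin (ℓ + 1), lam (k : ℕ) * (if (j : ℕ) < (k : ℕ) then 1 else 0) = z j := by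
    intro j
    rw [Fin.sum_univ_eq_sum_range (fun k => lam k * (if (j : ℕ) < k then 1 else 0))]
    have key : ∀ k, lam k * (if (j : ℕ) < k then 1 else 0)
        = (fun m => A (max m ((j : ℕ) + 1))) k - (fun m => A (max m ((j : ℕ) + 1))) (k + 1) := by
      intro k
      by_cases hk : (j : ℕ) < k
      · have e1 : max k ((j : ℕ) + 1) = k := by omega
        have e2 : max (k + 1) ((j : ℕ) + 1) = k + 1 := by omega
        simp [hk, hlam, e1, e2]
      · have e1 : max k ((j : ℕ) + 1) = (j : ℕ) + 1 := by omega
        have e2 : max (k + 1) ((j : ℕ) + 1) = (j : ℕ) + 1 := by omega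
        simp [hk, e1, e2]
    rw [Finset.sum_congr rfl (fun k _ => key k), Finset.sum_range_sub']
    have e1 : max 0 ((j : ℕ) + 1) = (j : ℕ) + 1 := by omega
    have e2 : max (ℓ + 1) ((j : ℕ) + 1) = ℓ + 1 := by omega
    simp only [e1, e2]
    rw [hAs (j : ℕ) j.isLt, hAtop ℓ le_rfl]
    simp
  have hvsum : ∑ k : Fin (ℓ + 1), lam (k : ℕ) * V (k : ℕ) = v := by
    rw [Fin.sum_univ_eq_sum_range (fun k => lam k * V k)]
    have split : ∀ k, lam k * V k
        = lam k * W k + ((if k = 0 then min 0 D else 0) + (if k = ℓ then max 0 D else 0)) := by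
      intro k
      by_cases hk0 : k = 0
      · subst hk0
        simp only [hV, if_pos rfl, if_neg (show (0:ℕ) ≠ ℓ by omega)]
        rw [mul_add, mul_div_cancel₀ _ hlam0.ne']
        simp
      · by_cases hkl : k = ℓ
        · rw [hkl]
          simp only [hV, if_neg (show ℓ ≠ 0 by omega), if_pos rfl, if_true]
          rw [mul_add, mul_div_cancel₀ _ hlamtop.ne']
          simp [show ℓ ≠ 0 by omega]
        · simp [hV, hk0, hkl]
    rw [Finset.sum_congr rfl (fun k _ => split k), Finset.sum_add_distrib,
      Finset.sum_add_distrib, Finset.sum_ite_eq' (Finset.range (ℓ + 1)) 0,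
      Finset.sum_ite_eq' (Finset.range (ℓ + 1)) ℓ]
    rw [if_pos (by simp), if_pos (by simp)]
    have : min 0 D + max 0 D = D := by rw [min_add_max]; ring
    simp only [← hS]
    linarith [this]
  -- assemble
  have hmem := Finset.centerMass_mem_convexHull (Finset.univ : Finset (Fin (ℓ + 1)))
    (w := fun k : Fin (ℓ + 1) => lam (k : ℕ))
    (fun i _ => hlam_nonneg i (by omega)) (by rw [hsum1]; norm_num)
    (z := p) (fun i _ => hpU i)
  rw [Finset.centerMass_eq_of_sum_1 _ _ hsum1] at hmem
  have : ∑ k : Fin (ℓ + 1), lam (k : ℕ) • p k = (v, z) := by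
    rw [Prod.ext_iff]
    constructor
    · rw [Prod.fst_sum]
      simp only [hp, Prod.smul_fst, smul_eq_mul]
      exact hvsum
    · rw [Prod.snd_sum]
      funext j
      rw [Finset.sum_apply]
      simp only [hp, Prod.smul_snd, Pi.smul_apply, smul_eq_mul]
      exact hzsum j
  rwa [this] at hmem

lemma Ubar_subset (ℓ : ℕ) (b : Fin ℓ → ℝ) (hb : StrictMono b) :
    Ubar ℓ b ⊆ {uz : ℝ × (Fin ℓ → ℝ) | (∀ j, uz.2 j ∈ Set.Icc (0 : ℝ) 1) ∧
        ∀ j : Fin ℓ, ∀ h : (j : ℕ) + 1 < ℓ, uz.2 ⟨(j : ℕ) + 1, h⟩ ≤ uz.2 j} := by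
  intro uz huz
  obtain ⟨h01, hc⟩ := huz
  refine ⟨fun j => ?_, fun j h => ?_⟩
  · rcases h01 j with h | h <;> rw [Set.mem_Icc, h] <;> norm_num
  · rcases h01 ⟨(j : ℕ) + 1, h⟩ with h2 | h2 <;> rcases h01 j with h3 | h3
    · rw [h2, h3]
    · rw [h2, h3]; norm_num
    · exfalso
      have hbj : b j < b ⟨(j : ℕ) + 1, h⟩ := hb (by simp [Fin.lt_def])
      have c1 := (hc j).2
      have c2 := (hc ⟨(j : ℕ) + 1, h⟩).1
      rw [h3] at c1
      rw [h2] at c2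
      nlinarith
    · rw [h2, h3]

/-- `cl conv(Ū) = {(v, z) ∈ ℝ × [0,1]^ℓ : z_{j+1} ≤ z_j ∀ j ∈ [ℓ−1]}`. -/
theorem stmt5 (ℓ : ℕ) (hℓ : 1 ≤ ℓ) (b : Fin ℓ → ℝ) (hb : StrictMono b) :
    closure (convexHull ℝ (Ubar ℓ b)) =
      {uz : ℝ × (Fin ℓ → ℝ) | (∀ j, uz.2 j ∈ Set.Icc (0 : ℝ) 1) ∧
        ∀ j : Fin ℓ, ∀ h : (j : ℕ) + 1 < ℓ, uz.2 ⟨(j : ℕ) + 1, h⟩ ≤ uz.2 j} := by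
  apply le_antisymm
  · -- ⊆
    apply closure_minimal
    · apply convexHull_min (Ubar_subset ℓ b hb)
      rintro ⟨v, z⟩ ⟨hz1, hz2⟩ ⟨w, y⟩ ⟨hy1, hy2⟩ a c ha hc hac
      constructor
      · intro j
        have := hz1 j; have := hy1 j
        simp only [Set.mem_Icc] at *
        constructor
        · have : (a • (v, z) + c • (w, y)).2 j = a * z j + c * y j := by
            simp [Prod.smul_snd]
          rw [this]; nlinarith [(hz1 j).1, (hy1 j).1]
        · have : (a • (v, z) + c • (w, y)).2 j = a * z j + c * y j := by
            simp [Prod.smul_snd]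
          rw [this]; nlinarith [(hz1 j).2, (hy1 j).2]
      · intro j h
        have e : ∀ i : Fin ℓ, (a • (v, z) + c • (w, y)).2 i = a * z i + c * y i := by
          intro i; simp [Prod.smul_snd]
        rw [e, e]
        nlinarith [hz2 j h, hy2 j h]
    · -- closedness
      have : {uz : ℝ × (Fin ℓ → ℝ) | (∀ j, uz.2 j ∈ Set.Icc (0 : ℝ) 1) ∧
          ∀ j : Fin ℓ, ∀ h : (j : ℕ) + 1 < ℓ, uz.2 ⟨(j : ℕ) + 1, h⟩ ≤ uz.2 j}
          = (⋂ j : Fin ℓ, {uz : ℝ × (Fin ℓ → ℝ) | uz.2 j ∈ Set.Icc (0 : ℝ) 1}) ∩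
            (⋂ j : Fin ℓ, ⋂ h : (j : ℕ) + 1 < ℓ,
              {uz : ℝ × (Fin ℓ → ℝ) | uz.2 ⟨(j : ℕ) + 1, h⟩ ≤ uz.2 j}) := by
        ext uz
        simp only [Set.mem_setOf_eq, Set.mem_inter_iff, Set.mem_iInter]
      rw [this]
      apply IsClosed.inter
      · exact isClosed_iInter fun j =>
          IsClosed.preimage ((continuous_apply j).comp continuous_snd) isClosed_Icc
      · exact isClosed_iInter fun j => isClosed_iInter fun h =>
          isClosed_le ((continuous_apply _).comp continuous_snd)
            ((continuous_apply _).comp continuous_snd)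
  · -- ⊇
    rintro ⟨v, z⟩ ⟨hz01, hdec⟩
    set c : Fin ℓ → ℝ := fun j => ((ℓ : ℝ) - (j : ℕ)) / ((ℓ : ℝ) + 1) with hcdef
    have hc0 : ∀ j, 0 < c j := by
      intro j
      apply div_pos _ (by positivity)
      have := j.isLt
      have : ((j : ℕ) : ℝ) < (ℓ : ℝ) := by exact_mod_cast this
      linarith
    have hc1 : ∀ j, c j < 1 := by
      intro j
      rw [div_lt_one (by positivity)]
      have : (0 : ℝ) ≤ ((j : ℕ) : ℝ) := by positivity
      linarith
    set seq : ℕ → ℝ × (Fin ℓ → ℝ) := fun n =>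
      (v, fun j => (1 - 1 / ((n : ℝ) + 1)) * z j + (1 / ((n : ℝ) + 1)) * c j) with hseq
    have hmem : ∀ n, seq n ∈ convexHull ℝ (Ubar ℓ b) := by
      intro n
      have hε0 : (0 : ℝ) < 1 / ((n : ℝ) + 1) := by positivity
      have hε1 : 1 / ((n : ℝ) + 1) ≤ 1 := by
        rw [div_le_one (by positivity)]
        simp
      apply key_mem ℓ hℓ b hb
      · intro j
        have := (hz01 j).1
        nlinarith [hc0 j]
      · intro j
        have := (hz01 j).2
        nlinarith [hc1 j]
      · intro j h
        have h1 := hdec j h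
        have h2 : c ⟨(j : ℕ) + 1, h⟩ < c j := by
          simp only [hcdef]
          have e : (((⟨(j : ℕ) + 1, h⟩ : Fin ℓ) : ℕ) : ℝ) = ((j : ℕ) : ℝ) + 1 := by
            norm_num
          rw [e]
          apply div_lt_div_of_pos_right ?_ (by positivity)
          linarith
        nlinarith
    apply mem_closure_of_tendsto (f := seq) (b := Filter.atTop)
    · apply Filter.Tendsto.prodMk_nhds tendsto_const_nhds
      rw [tendsto_pi_nhds]
      intro j
      have hε : Filter.Tendsto (fun n : ℕ => 1 / ((n : ℝ) + 1)) Filter.atTop (nhds 0) :=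
        tendsto_one_div_add_atTop_nhds_zero_nat
      have t1 : Filter.Tendsto (fun n : ℕ => (1 - 1 / ((n : ℝ) + 1)) * z j) Filter.atTop
          (nhds ((1 - 0) * z j)) := (Filter.Tendsto.const_sub 1 hε).mul tendsto_const_nhds
      have t2 : Filter.Tendsto (fun n : ℕ => (1 / ((n : ℝ) + 1)) * c j) Filter.atTop
          (nhds (0 * c j)) := hε.mul tendsto_const_nhds
      have := t1.add t2
      simpa [hseq] using this
    · exact Filter.Eventually.of_forall hmem
end

section
/- Let (v, z) ∈ ℝ × {0,1}^ℓ satisfy (v − b_j) z_j ≥ 0 and (b_j − v)(1 − z_j) ≥ 0 for all j ∈ [ℓ]. Define p_j = max{0, min{v, b_{j+1}} − b_j} for j ∈ [ℓ−1]. Then (b_{j+1} − b_j) z_{j+1} ≤ p_j ≤ (b_{j+1} − b_j) z_j for all j ∈ [ℓ−1]. -/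
/-- Let `(v, z) ∈ ℝ × {0,1}^ℓ` satisfy `(v − b_j) z_j ≥ 0` and `(b_j − v)(1 − z_j) ≥ 0`
for all `j ∈ [ℓ]`, and let `p_j = max{0, min{v, b_{j+1}} − b_j}` for `j ∈ [ℓ−1]`.  Then
`(b_{j+1} − b_j) z_{j+1} ≤ p_j ≤ (b_{j+1} − b_j) z_j` for all `j ∈ [ℓ−1]`. -/
theorem stmt8 (ℓ : ℕ) (hℓ : 2 ≤ ℓ) (b : ℕ → ℝ)
    (hb : ∀ j, 1 ≤ j → j < ℓ → b j < b (j + 1))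
    (v : ℝ) (z : ℕ → ℝ)
    (hz01 : ∀ j, 1 ≤ j → j ≤ ℓ → z j = 0 ∨ z j = 1)
    (hzv : ∀ j, 1 ≤ j → j ≤ ℓ → 0 ≤ (v - b j) * z j)
    (hvz : ∀ j, 1 ≤ j → j ≤ ℓ → 0 ≤ (b j - v) * (1 - z j))
    (p : ℕ → ℝ)
    (hp : ∀ j, 1 ≤ j → j ≤ ℓ - 1 → p j = max 0 (min v (b (j + 1)) - b j)) :
    ∀ j, 1 ≤ j → j ≤ ℓ - 1 →
      (b (j + 1) - b j) * z (j + 1) ≤ p j ∧ p j ≤ (b (j + 1) - b j) * z j := by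
  intro j hj1 hjl
  have hjlt : j < ℓ := by omega
  have hj1le : j + 1 ≤ ℓ := by omega
  have hjle : j ≤ ℓ := by omega
  have hbj : b j < b (j + 1) := hb j hj1 hjlt
  have hpe := hp j hj1 hjl
  have hz1 := hz01 (j+1) (by omega) hj1le
  have hz0 := hz01 j hj1 hjle
  have hzv1 := hzv (j+1) (by omega) hj1le
  have hzv0 := hzv j hj1 hjle
  have hvz1 := hvz (j+1) (by omega) hj1le
  have hvz0 := hvz j hj1 hjle
  rcases hz1 with h1 | h1
  · rw [h1]
    constructor
    · rw [hpe, mul_zero]; exact le_max_left _ _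
    · have hvle : v ≤ b (j+1) := by nlinarith
      rcases hz0 with h0 | h0
      · have hvle0 : v ≤ b j := by nlinarith
        rw [hpe, h0]
        have : min v (b (j+1)) - b j ≤ 0 := by
          have := min_le_left v (b (j+1)); linarith
        simp [max_eq_left this]
      · have hge0 : b j ≤ v := by nlinarith
        rw [hpe, h0]
        have hmin : min v (b (j+1)) = v := min_eq_left hvle
        rw [hmin]
        have : max 0 (v - b j) = v - b j := max_eq_right (by linarith)
        rw [this]; linarith
  · have hvge : b (j+1) ≤ v := by nlinarith
    have h0 : z j = 1 := by
      rcases hz0 with h0 | h0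
      · exfalso; rw [h0] at hvz0; nlinarith
      · exact h0
    have hmin : min v (b (j+1)) = b (j+1) := min_eq_right hvge
    rw [hpe, h1, h0, hmin]
    have : max 0 (b (j+1) - b j) = b (j+1) - b j := max_eq_right (by linarith)
    rw [this]
    constructor <;> linarith
end

section
/- (Validity of the extended formulation.) If (v, z, s) ∈ X, then there exists (p_0, p_1, ..., p_ℓ) ∈ ℝ_+^{ℓ+1} — namely p_0 = max{0, b_1 − v}, p_j = max{0, min{v, b_{j+1}} − b_j} for j ∈ [ℓ−1], p_ℓ = max{0, v − b_ℓ} — such that: (i) v = b_1 − p_0 + Σ_{j=1}^ℓ p_j; (ii) (b_{j+1} − b_j) z_{j+1} ≤ p_j ≤ (b_{j+1} − b_j) z_j for all j ∈ [ℓ−1]; and (iii) s ≥ (1 − z_1) ℒ(b_1 − p_0/(1 − z_1)) + Σ_{j=1}^{ℓ−1} (z_j − z_{j+1}) ℒ(b_j + (p_j − z_{j+1}(b_{j+1} − b_j))/(z_j − z_{j+1})) + z_ℓ ℒ(b_ℓ + p_ℓ/z_ℓ), where any term with zero multiplier is taken equal to 0 (and for this choice of p, every term with zero multiplier also has zero numerator).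 -/
/-- Validity of the extended formulation.  If `(v, z, s) ∈ X`, then
`p₀ = max{0, b₁ − v}`, `p_j = max{0, min{v, b_{j+1}} − b_j}` (`j ∈ [ℓ−1]`),
`p_ℓ = max{0, v − b_ℓ}` are nonnegative and satisfy the telescoping identity,
the bound constraints, and the perspective inequality; moreover every term with
zero multiplier also has zero numerator.  (In Lean, real division by zero is zero,
so a term `α * ℒ(b + u/α)` with `α = 0` equals `0`, matching the convention that
terms with zero multiplier are taken equal to `0`.) -/
theorem stmt10 (ℓ : ℕ) (hℓ : 1 ≤ ℓ) (b : ℕ → ℝ)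
    (hb : ∀ j, 1 ≤ j → j < ℓ → b j < b (j + 1))
    (L : ℝ → ℝ) (v : ℝ) (z : ℕ → ℝ) (s : ℝ)
    (hz01 : ∀ j, 1 ≤ j → j ≤ ℓ → z j = 0 ∨ z j = 1)
    (hLs : L v ≤ s)
    (hzv : ∀ j, 1 ≤ j → j ≤ ℓ → 0 ≤ (v - b j) * z j)
    (hvz : ∀ j, 1 ≤ j → j ≤ ℓ → 0 ≤ (b j - v) * (1 - z j)) :
    ∃ p : ℕ → ℝ,
      p 0 = max 0 (b 1 - v) ∧
      (∀ j, 1 ≤ j → j ≤ ℓ - 1 → p j = max 0 (min v (b (j + 1)) - b j)) ∧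
      p ℓ = max 0 (v - b ℓ) ∧
      (∀ j, j ≤ ℓ → 0 ≤ p j) ∧
      v = b 1 - p 0 + ∑ j ∈ Finset.Icc 1 ℓ, p j ∧
      (∀ j, 1 ≤ j → j ≤ ℓ - 1 →
        (b (j + 1) - b j) * z (j + 1) ≤ p j ∧ p j ≤ (b (j + 1) - b j) * z j) ∧
      (1 - z 1) * L (b 1 - p 0 / (1 - z 1)) +
          (∑ j ∈ Finset.Icc 1 (ℓ - 1),
            (z j - z (j + 1)) *
              L (b j + (p j - z (j + 1) * (b (j + 1) - b j)) / (z j - z (j + 1)))) +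
          z ℓ * L (b ℓ + p ℓ / z ℓ) ≤ s ∧
      (1 - z 1 = 0 → p 0 = 0) ∧
      (∀ j, 1 ≤ j → j ≤ ℓ - 1 → z j - z (j + 1) = 0 →
        p j - z (j + 1) * (b (j + 1) - b j) = 0) ∧
      (z ℓ = 0 → p ℓ = 0) := by

  classical
  have hbmono : ∀ i j : ℕ, 1 ≤ i → i ≤ j → j ≤ ℓ → b i ≤ b j := by
    intro i j h1
    induction j with
    | zero => intro h _; omega
    | succ n ih =>
      intro hij hjl
      rcases eq_or_lt_of_le hij with h | h
      · exact h ▸ le_rfl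
      · have h2 : i ≤ n := by omega
        have h3 := ih h2 (by omega)
        have h4 := hb n (by omega) (by omega)
        linarith
  have hz1' : ∀ j, 1 ≤ j → j ≤ ℓ → z j = 1 → b j ≤ v := by
    intro j h1 h2 hzj
    have := hzv j h1 h2; rw [hzj] at this; linarith
  have hz0' : ∀ j, 1 ≤ j → j ≤ ℓ → z j = 0 → v ≤ b j := by
    intro j h1 h2 hzj
    have := hvz j h1 h2; rw [hzj] at this; linarith
  have zmono : ∀ j, 1 ≤ j → j < ℓ → z (j+1) = 1 → z j = 1 := by
    intro j h1 h2 hzj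
    have hv : b (j+1) ≤ v := hz1' (j+1) (by omega) (by omega) hzj
    have hbj : b j < b (j+1) := hb j h1 h2
    rcases hz01 j h1 (by omega) with h | h
    · exfalso; have := hz0' j h1 (by omega) h; linarith
    · exact h
  have zup : ∀ i j : ℕ, 1 ≤ i → i ≤ j → j ≤ ℓ → z j = 1 → z i = 1 := by
    intro i j h1
    induction j with
    | zero => intro h _ _; omega
    | succ n ih =>
      intro hij hjl hz
      rcases eq_or_lt_of_le hij with h | h
      · exact h ▸ hz
      · have h2 : i ≤ n := by omega
        exact ih h2 (by omega) (zmono n (by omega) (by omega) hz)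
  have zzero : ∀ i j : ℕ, 1 ≤ i → i ≤ j → j ≤ ℓ → z i = 0 → z j = 0 := by
    intro i j h1 hij hjl hzi
    rcases hz01 j (by omega) hjl with h | h
    · exact h
    · exfalso
      have := zup i j h1 hij hjl h
      rw [hzi] at this; norm_num at this
  set p : ℕ → ℝ := fun j => if j = 0 then max 0 (b 1 - v) else if j = ℓ then
      max 0 (v - b ℓ) else max 0 (min v (b (j+1)) - b j) with hpdef
  have hp0 : p 0 = max 0 (b 1 - v) := by simp [hpdef]
  have hℓ0 : ℓ ≠ 0 := by omega
  have hpℓ : p ℓ = max 0 (v - b ℓ) := by simp [hpdef, hℓ0]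
  have hpmid : ∀ j, 1 ≤ j → j ≤ ℓ - 1 → p j = max 0 (min v (b (j+1)) - b j) := by
    intro j h1 h2
    have hne0 : j ≠ 0 := by omega
    have hneℓ : j ≠ ℓ := by omega
    simp [hpdef, hne0, hneℓ]
  have hpnn : ∀ j, j ≤ ℓ → 0 ≤ p j := by
    intro j _
    rw [hpdef]
    dsimp only
    split_ifs <;> exact le_max_left _ _
  have key : ∀ j, 1 ≤ j → j ≤ ℓ - 1 →
      p j = max (min v (b (j+1))) (b 1) - max (min v (b j)) (b 1) := by
    intro j h1 h2
    rw [hpmid j h1 h2]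
    have hb1j : b 1 ≤ b j := hbmono 1 j le_rfl h1 (by omega)
    have hbjj : b j < b (j+1) := hb j h1 (by omega)
    rcases le_total v (b 1) with hA | hA
    · rw [min_eq_left (by linarith : v ≤ b (j+1)), min_eq_left (by linarith : v ≤ b j),
          max_eq_right hA, max_eq_left (by linarith : v - b j ≤ 0)]
      ring
    · rcases le_total v (b j) with hB | hB
      · rw [min_eq_left (by linarith : v ≤ b (j+1)), min_eq_left hB,
            max_eq_left (by linarith : b 1 ≤ v), max_eq_left (by linarith : v - b j ≤ 0)]
        ring
      · rcases le_total v (b (j+1)) with hC | hC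
        · rw [min_eq_left hC, min_eq_right hB, max_eq_left (by linarith : b 1 ≤ v),
              max_eq_left hb1j, max_eq_right (by linarith : 0 ≤ v - b j)]
        · rw [min_eq_right hC, min_eq_right hB,
              max_eq_left (by linarith : b 1 ≤ b (j+1)),
              max_eq_left hb1j, max_eq_right (by linarith : 0 ≤ b (j+1) - b j)]
  have sumlem : ∀ m, m ≤ ℓ - 1 →
      ∑ j ∈ Finset.Icc 1 m, p j = max (min v (b (m+1))) (b 1) - b 1 := by
    intro m
    induction m with
    | zero =>
      intro _
      rw [max_eq_right (min_le_right v (b 1))]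
      simp
    | succ n ih =>
      intro hm
      rw [Finset.sum_Icc_succ_top (by omega : (1:ℕ) ≤ n+1), ih (by omega),
          key (n+1) (by omega) hm]
      ring
  have hb1ℓ : b 1 ≤ b ℓ := hbmono 1 ℓ le_rfl hℓ le_rfl
  have hsum : ∑ j ∈ Finset.Icc 1 ℓ, p j
      = max (min v (b ℓ)) (b 1) - b 1 + max 0 (v - b ℓ) := by
    have h1 : ℓ - 1 + 1 = ℓ := by omega
    calc ∑ j ∈ Finset.Icc 1 ℓ, p j = ∑ j ∈ Finset.Icc 1 (ℓ-1+1), p j := by rw [h1]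
      _ = ∑ j ∈ Finset.Icc 1 (ℓ-1), p j + p (ℓ-1+1) :=
          Finset.sum_Icc_succ_top (by omega : (1:ℕ) ≤ ℓ-1+1) p
      _ = max (min v (b ℓ)) (b 1) - b 1 + max 0 (v - b ℓ) := by
          rw [sumlem (ℓ-1) le_rfl, h1, hpℓ]
  refine ⟨p, hp0, hpmid, hpℓ, hpnn, ?_, ?_, ?_, ?_, ?_, ?_⟩
  · -- telescoping
    rw [hp0, hsum]
    rcases le_total v (b 1) with hA | hA
    · rw [max_eq_right (by linarith : 0 ≤ b 1 - v), min_eq_left (by linarith : v ≤ b ℓ),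
          max_eq_right hA, max_eq_left (by linarith : v - b ℓ ≤ 0)]
      ring
    · rcases le_total v (b ℓ) with hB | hB
      · rw [max_eq_left (by linarith : b 1 - v ≤ 0), min_eq_left hB,
            max_eq_left hA, max_eq_left (by linarith : v - b ℓ ≤ 0)]
        ring
      · rw [max_eq_left (by linarith : b 1 - v ≤ 0), min_eq_right hB,
            max_eq_left hb1ℓ, max_eq_right (by linarith : 0 ≤ v - b ℓ)]
        ring
  · -- bound constraints
    intro j h1 h2
    have hpj := hpmid j h1 h2
    have hbj : b j < b (j+1) := hb j h1 (by omega)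
    rcases hz01 j h1 (by omega) with hj0 | hj1
    · have hvj : v ≤ b j := hz0' j h1 (by omega) hj0
      have hj1' : z (j+1) = 0 := by
        rcases hz01 (j+1) (by omega) (by omega) with h | h
        · exact h
        · exfalso
          have := zmono j h1 (by omega) h
          rw [hj0] at this; norm_num at this
      have hmax : p j = 0 := by
        rw [hpj]
        have hmin := min_le_left v (b (j+1))
        exact max_eq_left (by linarith)
      rw [hmax, hj0, hj1']
      constructor <;> nlinarith
    · have hvj : b j ≤ v := hz1' j h1 (by omega) hj1
      rcases hz01 (j+1) (by omega) (by omega) with hj0' | hj1'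
      · have hvj' : v ≤ b (j+1) := hz0' (j+1) (by omega) (by omega) hj0'
        have hmax : p j = v - b j := by
          rw [hpj, min_eq_left hvj']
          exact max_eq_right (by linarith)
        rw [hmax, hj0', hj1]
        constructor <;> nlinarith
      · have hvj' : b (j+1) ≤ v := hz1' (j+1) (by omega) (by omega) hj1'
        have hmax : p j = b (j+1) - b j := by
          rw [hpj, min_eq_right hvj']
          exact max_eq_right (by linarith)
        rw [hmax, hj1, hj1']
        constructor <;> nlinarith
  · -- perspective inequality
    rcases hz01 1 le_rfl hℓ with hz1 | hz1
    · -- z 1 = 0 : all z j = 0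
      have hall : ∀ j, 1 ≤ j → j ≤ ℓ → z j = 0 := fun j hj1 hjℓ =>
        zzero 1 j le_rfl hj1 hjℓ hz1
      have hmid : ∑ j ∈ Finset.Icc 1 (ℓ-1),
          (z j - z (j + 1)) *
            L (b j + (p j - z (j + 1) * (b (j + 1) - b j)) / (z j - z (j + 1))) = 0 := by
        apply Finset.sum_eq_zero
        intro j hj
        rw [Finset.mem_Icc] at hj
        rw [hall j hj.1 (by omega), hall (j+1) (by omega) (by omega)]
        ring
      have hv1 : v ≤ b 1 := hz0' 1 le_rfl hℓ hz1
      have hzℓ : z ℓ = 0 := hall ℓ hℓ le_rfl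
      rw [hmid, hz1, hzℓ, hp0, max_eq_right (by linarith : (0:ℝ) ≤ b 1 - v)]
      have harg : b 1 - (b 1 - v) / (1 - 0) = v := by ring
      rw [harg]
      linarith
    · -- z 1 = 1
      rcases hz01 ℓ hℓ le_rfl with hzℓ | hzℓ
      · -- z ℓ = 0, z 1 = 1 : find breakpoint k
        have hk : ∃ k, 1 ≤ k ∧ k < ℓ ∧ z k = 1 ∧ z (k+1) = 0 := by
          by_contra hcon
          push_neg at hcon
          have hall1 : ∀ j, 1 ≤ j → j ≤ ℓ → z j = 1 := by
            intro j
            induction j with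
            | zero => intro h _; omega
            | succ n ih =>
              intro _ h2
              rcases Nat.eq_zero_or_pos n with h | h
              · subst h; exact hz1
              · have hn := ih (by omega) (by omega)
                rcases hz01 (n+1) (by omega) (by omega) with h' | h'
                · exact absurd h' (hcon n (by omega) (by omega) hn)
                · exact h'
          have := hall1 ℓ hℓ le_rfl
          rw [hzℓ] at this; norm_num at this
        obtain ⟨k, hk1, hkℓ, hzk, hzk1⟩ := hk
        have hvk : b k ≤ v := hz1' k hk1 (by omega) hzk
        have hvk1 : v ≤ b (k+1) := hz0' (k+1) (by omega) (by omega) hzk1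
        have hpk : p k = v - b k := by
          rw [hpmid k hk1 (by omega), min_eq_left hvk1]
          exact max_eq_right (by linarith)
        have hmid : ∑ j ∈ Finset.Icc 1 (ℓ-1),
            (z j - z (j + 1)) *
              L (b j + (p j - z (j + 1) * (b (j + 1) - b j)) / (z j - z (j + 1))) = L v := by
          rw [Finset.sum_eq_single_of_mem k (by rw [Finset.mem_Icc]; omega)]
          · rw [hzk, hzk1, hpk]
            have harg : b k + (v - b k - 0 * (b (k+1) - b k)) / (1 - 0) = v := by ring
            rw [harg]; ring
          · intro j hj hne
            rw [Finset.mem_Icc] at hj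
            rcases Nat.lt_or_ge j k with h | h
            · rw [zup j k hj.1 (by omega) (by omega) hzk,
                  zup (j+1) k (by omega) (by omega) (by omega) hzk]
              ring
            · have hjk : k + 1 ≤ j := by omega
              rw [zzero (k+1) j (by omega) hjk (by omega) hzk1,
                  zzero (k+1) (j+1) (by omega) (by omega) (by omega) hzk1]
              ring
        rw [hmid, hz1, hzℓ]
        norm_num
        linarith
      · -- z ℓ = 1 : all z j = 1
        have hall : ∀ j, 1 ≤ j → j ≤ ℓ → z j = 1 := fun j hj1 hjℓ =>
          zup j ℓ hj1 hjℓ le_rfl hzℓ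
        have hmid : ∑ j ∈ Finset.Icc 1 (ℓ-1),
            (z j - z (j + 1)) *
              L (b j + (p j - z (j + 1) * (b (j + 1) - b j)) / (z j - z (j + 1))) = 0 := by
          apply Finset.sum_eq_zero
          intro j hj
          rw [Finset.mem_Icc] at hj
          rw [hall j hj.1 (by omega), hall (j+1) (by omega) (by omega)]
          ring
        have hvℓ : b ℓ ≤ v := hz1' ℓ hℓ le_rfl hzℓ
        rw [hmid, hz1, hzℓ, hpℓ, max_eq_right (by linarith : (0:ℝ) ≤ v - b ℓ)]
        have harg : b ℓ + (v - b ℓ) / 1 = v := by ring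
        rw [harg]
        norm_num
        linarith
  · -- 1 - z 1 = 0 → p 0 = 0
    intro h
    have hz1 : z 1 = 1 := by linarith
    have hv1 : b 1 ≤ v := hz1' 1 le_rfl hℓ hz1
    rw [hp0]
    exact max_eq_left (by linarith)
  · -- middle zero numerators
    intro j h1 h2 hzz
    have hbj : b j < b (j+1) := hb j h1 (by omega)
    rcases hz01 j h1 (by omega) with hj0 | hj1
    · have hj0' : z (j+1) = 0 := by rw [hj0] at hzz; linarith
      have hvj : v ≤ b j := hz0' j h1 (by omega) hj0
      have hpj : p j = 0 := by
        rw [hpmid j h1 h2]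
        have hmin := min_le_left v (b (j+1))
        exact max_eq_left (by linarith)
      rw [hpj, hj0']
      ring
    · have hj1' : z (j+1) = 1 := by rw [hj1] at hzz; linarith
      have hvj : b (j+1) ≤ v := hz1' (j+1) (by omega) (by omega) hj1'
      have hpj : p j = b (j+1) - b j := by
        rw [hpmid j h1 h2, min_eq_right hvj]
        exact max_eq_right (by linarith)
      rw [hpj, hj1']
      ring
  · -- z ℓ = 0 → p ℓ = 0
    intro h
    have hvℓ : v ≤ b ℓ := hz0' ℓ hℓ le_rfl h
    rw [hpℓ]
    exact max_eq_left (by linarith)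
end

section
/- (Conic relaxation validity.) Fix data x_1, ..., x_m ∈ ℝ^n, a subset A ⊆ [m] of cardinality m_1 ≥ 1, breakpoints b_1 < ... < b_ℓ, λ ≥ 0, and losses ℒ_i : ℝ → ℝ with ℒ_i(b_j) finite for all i, j. Then the optimal value of the convex relaxation (8) — minimize Σ_{i=1}^m s_i + λ t over w ∈ ℝ^n, z ∈ [0,1]^{m×ℓ}, p ∈ ℝ^{m×(ℓ+1)}, s ∈ ℝ^m, t ∈ ℝ subject to, for every i ∈ [m]: w·x_i = b_1 − p_{i0} + Σ_{j=1}^ℓ p_{ij}; (b_{j+1} − b_j) z_{i,j+1} ≤ p_{ij} ≤ (b_{j+1} − b_j) z_{ij} for j ∈ [ℓ−1]; p_{i0} ≥ 0, p_{iℓ} ≥ 0; the perspective inequality persp_{ℒ_i}(1 − z_{i1}, −p_{i0}; b_1) + Σ_{j=1}^{ℓ−1} persp_{ℒ_i}(z_{ij} − z_{i,j+1}, p_{ij} − z_{i,j+1}(b_{j+1} − b_j); b_j) + persp_{ℒ_i}(z_{iℓ}, p_{iℓ}; b_ℓ) ≤ s_i; and, for every j ∈ [ℓ]: (1/m_1)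 Σ_{i ∈ A} z_{ij} − (1/m) Σ_{i=1}^m z_{ij} ≤ t — is less than or equal to the optimal value of (FR1): minimize over w ∈ ℝ^n of Σ_{i=1}^m ℒ_i(w·x_i) + λ max_{j ∈ [ℓ]} [ (1/m_1) Σ_{i ∈ A} 1(w·x_i > b_j) − (1/m) Σ_{i=1}^m 1(w·x_i > b_j) ]. -/
noncomputable def persp (L : ℝ → ℝ) (c : ℝ) (α u : ℝ) : EReal :=
  if 0 < α then ((α * L (c + u / α) : ℝ) : EReal)
  else Filter.limsup (fun t : ℝ => ((t * L (c + u / t) : ℝ) : EReal))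
    (nhdsWithin 0 (Set.Ioi 0))

lemma persp_pos (L : ℝ → ℝ) (c : ℝ) {α : ℝ} (h : 0 < α) (u : ℝ) :
    persp L c α u = ((α * L (c + u / α) : ℝ) : EReal) := by simp [persp, h]

lemma persp_zero (L : ℝ → ℝ) (c : ℝ) : persp L c 0 0 = 0 := by
  unfold persp
  rw [if_neg (lt_irrefl 0)]
  have h : Filter.Tendsto (fun t : ℝ => ((t * L (c + 0 / t) : ℝ) : EReal))
      (nhdsWithin 0 (Set.Ioi 0)) (nhds (0 : EReal)) := by
    have h0 : Filter.Tendsto (fun t : ℝ => t * L c) (nhdsWithin 0 (Set.Ioi 0)) (nhds 0) := by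
      have := (continuous_id.mul (continuous_const (y := L c))).tendsto (0 : ℝ)
      simpa [Pi.mul_def] using this.mono_left nhdsWithin_le_nhds
    have := EReal.tendsto_coe.mpr h0
    simpa using this
  exact h.limsup_eq

lemma persp_first (Li : ℝ → ℝ) (b0 v : ℝ) :
    persp Li b0 (1 - (if b0 < v then (1:ℝ) else 0)) (-(max (b0 - v) 0))
      = (((1 - (if b0 < v then (1:ℝ) else 0)) * Li v : ℝ) : EReal) := by
  by_cases h : b0 < v
  · rw [if_pos h, max_eq_right (by linarith)]
    rw [show (1:ℝ) - 1 = 0 by ring, neg_zero, persp_zero]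
    norm_num
  · rw [if_neg h, sub_zero, max_eq_left (by push_neg at h; linarith)]
    rw [persp_pos _ _ one_pos, show b0 + -(b0 - v) / 1 = v by ring]

lemma persp_last (Li : ℝ → ℝ) (bl v : ℝ) :
    persp Li bl (if bl < v then (1:ℝ) else 0) (max (v - bl) 0)
      = (((if bl < v then (1:ℝ) else 0) * Li v : ℝ) : EReal) := by
  by_cases h : bl < v
  · rw [if_pos h, max_eq_left (by linarith)]
    rw [persp_pos _ _ one_pos, show bl + (v - bl) / 1 = v by ring]
  · rw [if_neg h, max_eq_right (by push_neg at h; linarith), persp_zero]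
    norm_num

lemma persp_mid (Li : ℝ → ℝ) (a c v : ℝ) (hac : a < c) :
    persp Li a ((if a < v then (1:ℝ) else 0) - (if c < v then (1:ℝ) else 0))
      (min (max (v - a) 0) (c - a) - (if c < v then (1:ℝ) else 0) * (c - a))
    = ((((if a < v then (1:ℝ) else 0) - (if c < v then (1:ℝ) else 0)) * Li v : ℝ) : EReal) := by
  by_cases hc : c < v
  · have ha : a < v := hac.trans hc
    rw [if_pos ha, if_pos hc, one_mul]
    have h1 : min (max (v - a) 0) (c - a) = c - a := by
      rw [max_eq_left (by linarith)]; exact min_eq_right (by linarith)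
    rw [h1, sub_self, sub_self, persp_zero]
    norm_num
  · by_cases ha : a < v
    · rw [if_pos ha, if_neg hc, zero_mul, sub_zero, sub_zero]
      have h1 : min (max (v - a) 0) (c - a) = v - a := by
        rw [max_eq_left (by linarith)]
        exact min_eq_left (by push_neg at hc; linarith)
      rw [h1, persp_pos _ _ one_pos, show a + (v - a) / 1 = v by ring]
    · rw [if_neg ha, if_neg hc, zero_mul, sub_zero, sub_zero]
      have h1 : min (max (v - a) 0) (c - a) = 0 := by
        rw [max_eq_right (by push_neg at ha; linarith)]
        exact min_eq_left (by linarith)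
      rw [h1, persp_zero]
      norm_num

lemma ereal_coe_sum {α : Type*} (s : Finset α) (f : α → ℝ) :
    ((∑ a ∈ s, f a : ℝ) : EReal) = ∑ a ∈ s, ((f a : ℝ) : EReal) := by
  induction s using Finset.cons_induction with
  | empty => simp
  | cons a s ha ih => rw [Finset.sum_cons, Finset.sum_cons, EReal.coe_add, ih]

lemma min_max_tel (a c v : ℝ) (h : a ≤ c) :
    min (max (v - a) 0) (c - a) = min v c - min v a := by
  simp only [min_def, max_def]; split_ifs <;> linarith

lemma max_tel (a v : ℝ) : max (v - a) 0 = v - min v a := by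
  simp only [min_def, max_def]; split_ifs <;> linarith

lemma sum_P (ℓ : ℕ) (hℓ : 1 ≤ ℓ) (b : Fin ℓ → ℝ) (hb : StrictMono b) (v : ℝ) :
    ∑ j : Fin ℓ, (if h : (j : ℕ) + 1 < ℓ then
        min (max (v - b j) 0) (b ⟨(j : ℕ) + 1, h⟩ - b j) else max (v - b j) 0)
      = v - min v (b ⟨0, hℓ⟩) := by
  set G : ℕ → ℝ := fun k => if h : k < ℓ then min v (b ⟨k, h⟩) else v with hG
  have hterm : ∀ j : Fin ℓ, (if h : (j : ℕ) + 1 < ℓ then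
      min (max (v - b j) 0) (b ⟨(j : ℕ) + 1, h⟩ - b j) else max (v - b j) 0)
      = G ((j : ℕ) + 1) - G (j : ℕ) := by
    intro j
    have hj : G (j : ℕ) = min v (b j) := by simp [hG, j.isLt]
    by_cases h : (j : ℕ) + 1 < ℓ
    · have hlt : b j < b ⟨(j : ℕ) + 1, h⟩ := hb (by simp [Fin.lt_def])
      have hj1 : G ((j : ℕ) + 1) = min v (b ⟨(j : ℕ) + 1, h⟩) := by simp [hG, h]
      rw [dif_pos h, hj, hj1]
      exact min_max_tel _ _ _ hlt.le
    · have hj1 : G ((j : ℕ) + 1) = v := by simp [hG, h]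
      rw [dif_neg h, hj, hj1]
      exact max_tel _ _
  rw [Finset.sum_congr rfl (fun j _ => hterm j),
    Fin.sum_univ_eq_sum_range (fun k => G (k + 1) - G k), Finset.sum_range_sub]
  have h1 : G ℓ = v := by simp [hG]
  have h0 : G 0 = min v (b ⟨0, hℓ⟩) := dif_pos hℓ
  rw [h1, h0]

/-- Conic relaxation validity: the optimal value of the convex relaxation (8) is at most
the optimal value of (FR1).  Optimal values are taken as infima in `EReal` over the
respective feasible regions. -/
theorem stmt13 (m n ℓ m₁ : ℕ) (hm : 1 ≤ m) (hℓ : 1 ≤ ℓ)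
    (x : Fin m → Fin n → ℝ) (A : Finset (Fin m)) (hA : A.card = m₁) (hm₁ : 1 ≤ m₁)
    (b : Fin ℓ → ℝ) (hb : StrictMono b) (lam : ℝ) (hlam : 0 ≤ lam)
    (L : Fin m → ℝ → ℝ) :
    sInf {c : EReal |
      ∃ (w : Fin n → ℝ) (z : Fin m → Fin ℓ → ℝ) (p : Fin m → Fin (ℓ + 1) → ℝ)
        (s : Fin m → ℝ) (t : ℝ),
        (∀ i j, z i j ∈ Set.Icc (0 : ℝ) 1) ∧
        (∀ i, ∑ k, w k * x i k = b ⟨0, hℓ⟩ - p i 0 + ∑ j : Fin ℓ, p i j.succ) ∧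
        (∀ i, ∀ j : Fin ℓ, ∀ h : (j : ℕ) + 1 < ℓ,
          (b ⟨(j : ℕ) + 1, h⟩ - b j) * z i ⟨(j : ℕ) + 1, h⟩ ≤ p i j.succ ∧
          p i j.succ ≤ (b ⟨(j : ℕ) + 1, h⟩ - b j) * z i j) ∧
        (∀ i, 0 ≤ p i 0) ∧ (∀ i, 0 ≤ p i (Fin.last ℓ)) ∧
        (∀ i, persp (L i) (b ⟨0, hℓ⟩) (1 - z i ⟨0, hℓ⟩) (-(p i 0)) +
            (∑ k : Fin (ℓ - 1),
              persp (L i) (b ⟨(k : ℕ), Nat.lt_of_lt_of_le k.isLt (Nat.sub_le ℓ 1)⟩)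
                (z i ⟨(k : ℕ), Nat.lt_of_lt_of_le k.isLt (Nat.sub_le ℓ 1)⟩ -
                  z i ⟨(k : ℕ) + 1, Nat.add_lt_of_lt_sub k.isLt⟩)
                (p i ⟨(k : ℕ) + 1, Nat.lt_succ_of_lt (Nat.add_lt_of_lt_sub k.isLt)⟩ -
                  z i ⟨(k : ℕ) + 1, Nat.add_lt_of_lt_sub k.isLt⟩ *
                    (b ⟨(k : ℕ) + 1, Nat.add_lt_of_lt_sub k.isLt⟩ -
                      b ⟨(k : ℕ), Nat.lt_of_lt_of_le k.isLt (Nat.sub_le ℓ 1)⟩))) +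
            persp (L i) (b ⟨ℓ - 1, Nat.sub_lt hℓ Nat.one_pos⟩)
              (z i ⟨ℓ - 1, Nat.sub_lt hℓ Nat.one_pos⟩) (p i (Fin.last ℓ)) ≤
          ((s i : ℝ) : EReal)) ∧
        (∀ j : Fin ℓ,
          (1 / (m₁ : ℝ)) * ∑ i ∈ A, z i j - (1 / (m : ℝ)) * ∑ i, z i j ≤ t) ∧
        c = (((∑ i, s i) + lam * t : ℝ) : EReal)} ≤
    sInf {c : EReal |
      ∃ w : Fin n → ℝ,
        c = (((∑ i, L i (∑ k, w k * x i k)) + lam *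
          Finset.univ.sup' ⟨⟨0, hℓ⟩, Finset.mem_univ _⟩ (fun j : Fin ℓ =>
            (1 / (m₁ : ℝ)) *
                ∑ i ∈ A, (if b j < ∑ k, w k * x i k then (1 : ℝ) else 0) -
              (1 / (m : ℝ)) *
                ∑ i, (if b j < ∑ k, w k * x i k then (1 : ℝ) else 0)) : ℝ) : EReal)} := by
  apply sInf_le_sInf
  rintro c ⟨w, rfl⟩
  refine ⟨w, fun i j => if b j < ∑ k, w k * x i k then 1 else 0,
    fun i => Fin.cases (max (b ⟨0, hℓ⟩ - ∑ k, w k * x i k) 0)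
      (fun j : Fin ℓ => if h : (j : ℕ) + 1 < ℓ then
        min (max ((∑ k, w k * x i k) - b j) 0) (b ⟨(j : ℕ) + 1, h⟩ - b j)
        else max ((∑ k, w k * x i k) - b j) 0),
    fun i => L i (∑ k, w k * x i k), _, ?_, ?_, ?_, ?_, ?_, ?_, ?_, rfl⟩
  · intro i j; dsimp only; constructor <;> split_ifs <;> norm_num
  · intro i
    dsimp only
    rw [Fin.cases_zero]
    simp only [Fin.cases_succ]
    rw [sum_P ℓ hℓ b hb (∑ k, w k * x i k)]
    rw [max_tel (∑ k, w k * x i k) (b ⟨0, hℓ⟩), min_comm]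
    ring
  · intro i j h
    have hlt : b j < b ⟨(j : ℕ) + 1, h⟩ := hb (by simp [Fin.lt_def])
    dsimp only
    rw [Fin.cases_succ, dif_pos h]
    constructor <;> split_ifs <;>
      simp only [min_def, max_def, mul_one, mul_zero] <;> split_ifs <;> linarith
  · intro i; dsimp only; rw [Fin.cases_zero]; exact le_max_right _ _
  · intro i
    dsimp only
    rw [show (Fin.last ℓ) = (⟨ℓ - 1 + 1, by omega⟩ : Fin (ℓ + 1)) from Fin.ext (show ℓ = ℓ - 1 + 1 by omega)]
    rw [Fin.cases_succ', dif_neg (show ¬(ℓ - 1 + 1 < ℓ) by omega)]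
    exact le_max_right _ _
  · intro i
    dsimp only
    rw [show (Fin.last ℓ) = (⟨ℓ - 1 + 1, by omega⟩ : Fin (ℓ + 1)) from Fin.ext (show ℓ = ℓ - 1 + 1 by omega)]
    rw [Fin.cases_zero]
    simp only [Fin.cases_succ']
    rw [dif_neg (show ¬(ℓ - 1 + 1 < ℓ) by omega)]
    set V : ℝ := ∑ k : Fin n, w k * x i k with hV
    have lt1 : ∀ k : Fin (ℓ - 1), (k : ℕ) < ℓ :=
      fun k => Nat.lt_of_lt_of_le k.isLt (Nat.sub_le ℓ 1)
    have lt2 : ∀ k : Fin (ℓ - 1), (k : ℕ) + 1 < ℓ := fun k => Nat.add_lt_of_lt_sub k.isLt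
    have hmid : ∀ k : Fin (ℓ - 1),
        persp (L i) (b ⟨(k : ℕ), lt1 k⟩)
          ((if b ⟨(k : ℕ), lt1 k⟩ < V then (1:ℝ) else 0) -
            if b ⟨(k : ℕ) + 1, lt2 k⟩ < V then (1:ℝ) else 0)
          ((if h : (k : ℕ) + 1 < ℓ then
              min (max (V - b ⟨(k : ℕ), lt1 k⟩) 0) (b ⟨(k : ℕ) + 1, h⟩ - b ⟨(k : ℕ), lt1 k⟩)
              else max (V - b ⟨(k : ℕ), lt1 k⟩) 0) -
            (if b ⟨(k : ℕ) + 1, lt2 k⟩ < V then (1:ℝ) else 0) *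
              (b ⟨(k : ℕ) + 1, lt2 k⟩ - b ⟨(k : ℕ), lt1 k⟩))
        = ((((if b ⟨(k : ℕ), lt1 k⟩ < V then (1:ℝ) else 0) -
            (if b ⟨(k : ℕ) + 1, lt2 k⟩ < V then (1:ℝ) else 0)) * L i V : ℝ) : EReal) := by
      intro k
      rw [dif_pos (lt2 k)]
      exact persp_mid (L i) _ _ V (hb (by simp [Fin.lt_def]))
    rw [persp_first (L i) (b ⟨0, hℓ⟩) V,
      persp_last (L i) (b ⟨ℓ - 1, Nat.sub_lt hℓ Nat.one_pos⟩) V,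
      Finset.sum_congr rfl (fun k _ => hmid k)]
    have hcoe : (∑ k : Fin (ℓ - 1), ((((if b ⟨(k : ℕ), lt1 k⟩ < V then (1:ℝ) else 0) -
          (if b ⟨(k : ℕ) + 1, lt2 k⟩ < V then (1:ℝ) else 0)) * L i V : ℝ) : EReal))
        = (((∑ k : Fin (ℓ - 1), ((if b ⟨(k : ℕ), lt1 k⟩ < V then (1:ℝ) else 0) -
          (if b ⟨(k : ℕ) + 1, lt2 k⟩ < V then (1:ℝ) else 0))) * L i V : ℝ) : EReal) := by
      rw [Finset.sum_mul, ereal_coe_sum]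
    have htel : (∑ k : Fin (ℓ - 1), ((if b ⟨(k : ℕ), lt1 k⟩ < V then (1:ℝ) else 0) -
          (if b ⟨(k : ℕ) + 1, lt2 k⟩ < V then (1:ℝ) else 0)))
        = (if b ⟨0, hℓ⟩ < V then (1:ℝ) else 0) -
          (if b ⟨ℓ - 1, Nat.sub_lt hℓ Nat.one_pos⟩ < V then (1:ℝ) else 0) := by
      set X : ℕ → ℝ := fun k => if h : k < ℓ then (if b ⟨k, h⟩ < V then 1 else 0) else 0
        with hX
      have hterm : ∀ k : Fin (ℓ - 1),
          ((if b ⟨(k : ℕ), lt1 k⟩ < V then (1:ℝ) else 0) -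
            (if b ⟨(k : ℕ) + 1, lt2 k⟩ < V then (1:ℝ) else 0))
          = X (k : ℕ) - X ((k : ℕ) + 1) := by
        intro k
        have e1 : X (k : ℕ) = if b ⟨(k : ℕ), lt1 k⟩ < V then (1:ℝ) else 0 := dif_pos (lt1 k)
        have e2 : X ((k : ℕ) + 1) = if b ⟨(k : ℕ) + 1, lt2 k⟩ < V then (1:ℝ) else 0 :=
          dif_pos (lt2 k)
        rw [e1, e2]
      rw [Finset.sum_congr rfl (fun k _ => hterm k),
        Fin.sum_univ_eq_sum_range (fun k => X k - X (k + 1)), Finset.sum_range_sub' X]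
      have e0 : X 0 = if b ⟨0, hℓ⟩ < V then (1:ℝ) else 0 := dif_pos hℓ
      have el : X (ℓ - 1) = if b ⟨ℓ - 1, Nat.sub_lt hℓ Nat.one_pos⟩ < V then (1:ℝ) else 0 :=
        dif_pos (Nat.sub_lt hℓ Nat.one_pos)
      rw [e0, el]
    rw [hcoe, htel]
    apply le_of_eq
    rw [← EReal.coe_add, ← EReal.coe_add, EReal.coe_eq_coe_iff]
    ring
  · intro j
    dsimp only
    exact Finset.le_sup' (fun j : Fin ℓ =>
            (1 / (m₁ : ℝ)) *
                ∑ i ∈ A, (if b j < ∑ k, w k * x i k then (1 : ℝ) else 0) -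
              (1 / (m : ℝ)) *
                ∑ i, (if b j < ∑ k, w k * x i k then (1 : ℝ) else 0)) (Finset.mem_univ j)
end

section
/- (Weakness of the natural big-M relaxation.) Fix data x_1, ..., x_m ∈ ℝ^n, a subset A ⊆ [m] of cardinality m_1 ≥ 1, breakpoints b_1 < ... < b_ℓ, and w ∈ ℝ^n. If M ≥ 2|w·x_i − b_j| for all i ∈ [m], j ∈ [ℓ], then the point (w, z, t) with z_{ij} = 1/2 for all i, j and t = 0 is feasible for the continuous relaxation of (NAT), i.e., it satisfies (1/m_1) Σ_{i ∈ A} z_{ij} − (1/m) Σ_{i=1}^m z_{ij} ≤ t for all j ∈ [ℓ], w·x_i − b_j ≤ M z_{ij} and w·x_i − b_j ≥ −M(1 − z_{ij}) for all i, j, and z ∈ [0,1]^{m×ℓ}; moreover its objective Σ_{i=1}^m ℒ_i(w·x_i) + λ t equals Σ_{i=1}^m ℒ_i(w·x_i). Consequently, for sufficiently large M the optimal value of the continuous relaxation of (NAT) is at most min_{w ∈ ℝ^n} Σ_{i=1}^m ℒ_i(w·x_i), the value of the regression problem that disregards fairness. -/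
lemma aux14 (d M : ℝ) (h : 2 * |d| ≤ M) : d ≤ M * (1/2) ∧ -(M * (1 - (1/2:ℝ))) ≤ d := by
  have h1 : |d| ≤ M / 2 := by linarith
  have h2 := abs_le.mp h1
  constructor <;> [linarith [h2.2]; linarith [h2.1]]

lemma aux14' (m m₁ : ℕ) (hm : (0:ℝ) < m) (hm₁ : (0:ℝ) < m₁) :
    (1 / (m₁ : ℝ)) * ((m₁ : ℝ) * (1/2)) - (1 / (m : ℝ)) * ((m : ℝ) * (1/2)) ≤ 0 := by
  have h1 : (1/(m₁:ℝ)) * ((m₁:ℝ)*(1/2)) = 1/2 := by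
    rw [one_div, inv_mul_cancel_left₀ (ne_of_gt hm₁)]
  have h2 : (1/(m:ℝ)) * ((m:ℝ)*(1/2)) = 1/2 := by
    rw [one_div, inv_mul_cancel_left₀ (ne_of_gt hm)]
  rw [h1, h2]; simp

/-- Weakness of the natural big-M relaxation.  If `M ≥ 2|w·xᵢ − bⱼ|` for all `i, j`,
then `(w, z, t)` with `z_{ij} = 1/2` and `t = 0` is feasible for the continuous
relaxation of (NAT) and has objective `Σᵢ ℒᵢ(w·xᵢ)`.  Consequently, if `w*` minimizes
the unfair regression objective, then for all sufficiently large `M` the optimal value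
(infimum, in `EReal`) of the continuous relaxation of (NAT) is at most
`Σᵢ ℒᵢ(w*·xᵢ) = min_w Σᵢ ℒᵢ(w·xᵢ)`. -/
theorem stmt14 (m n ℓ m₁ : ℕ) (hm : 1 ≤ m) (hℓ : 1 ≤ ℓ)
    (x : Fin m → Fin n → ℝ) (A : Finset (Fin m)) (hA : A.card = m₁) (hm₁ : 1 ≤ m₁)
    (b : Fin ℓ → ℝ) (hb : StrictMono b) (lam : ℝ) (hlam : 0 ≤ lam)
    (L : Fin m → ℝ → ℝ) :
    (∀ (w : Fin n → ℝ) (M : ℝ),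
      (∀ (i : Fin m) (j : Fin ℓ), 2 * |(∑ k, w k * x i k) - b j| ≤ M) →
      (∀ j : Fin ℓ,
        (1 / (m₁ : ℝ)) * ∑ _i ∈ A, (1 / 2 : ℝ) -
          (1 / (m : ℝ)) * ∑ _i : Fin m, (1 / 2 : ℝ) ≤ (0 : ℝ)) ∧
      (∀ (i : Fin m) (j : Fin ℓ), (∑ k, w k * x i k) - b j ≤ M * (1 / 2 : ℝ)) ∧
      (∀ (i : Fin m) (j : Fin ℓ), -(M * (1 - (1 / 2 : ℝ))) ≤ (∑ k, w k * x i k) - b j) ∧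
      ((1 / 2 : ℝ) ∈ Set.Icc (0 : ℝ) 1) ∧
      (∑ i, L i (∑ k, w k * x i k)) + lam * 0 = ∑ i, L i (∑ k, w k * x i k)) ∧
    (∀ wstar : Fin n → ℝ,
      (∀ w : Fin n → ℝ,
        ∑ i, L i (∑ k, wstar k * x i k) ≤ ∑ i, L i (∑ k, w k * x i k)) →
      ∃ M₀ : ℝ, ∀ M : ℝ, M₀ ≤ M →
        sInf {c : EReal |
          ∃ (w : Fin n → ℝ) (z : Fin m → Fin ℓ → ℝ) (t : ℝ),
            (∀ i j, z i j ∈ Set.Icc (0 : ℝ) 1) ∧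
            (∀ j : Fin ℓ,
              (1 / (m₁ : ℝ)) * ∑ i ∈ A, z i j - (1 / (m : ℝ)) * ∑ i, z i j ≤ t) ∧
            (∀ (i : Fin m) (j : Fin ℓ), (∑ k, w k * x i k) - b j ≤ M * z i j) ∧
            (∀ (i : Fin m) (j : Fin ℓ),
              -(M * (1 - z i j)) ≤ (∑ k, w k * x i k) - b j) ∧
            c = (((∑ i, L i (∑ k, w k * x i k)) + lam * t : ℝ) : EReal)} ≤
        ((∑ i, L i (∑ k, wstar k * x i k) : ℝ) : EReal)) := by
  have hm0 : (0 : ℝ) < m := by exact_mod_cast hm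
  have hm₁0 : (0 : ℝ) < m₁ := by exact_mod_cast hm₁
  have hsum : ∀ j : Fin ℓ,
      (1 / (m₁ : ℝ)) * ∑ _i ∈ A, (1 / 2 : ℝ) -
        (1 / (m : ℝ)) * ∑ _i : Fin m, (1 / 2 : ℝ) ≤ (0 : ℝ) := by
    intro j
    simp only [Finset.sum_const, hA, Finset.card_univ, Fintype.card_fin, nsmul_eq_mul]
    exact aux14' m m₁ hm0 hm₁0
  constructor
  · intro w M hM
    exact ⟨hsum, fun i j => (aux14 _ _ (hM i j)).1, fun i j => (aux14 _ _ (hM i j)).2,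
      ⟨by norm_num, by norm_num⟩, by ring⟩
  · intro wstar hmin
    haveI : Nonempty (Fin m × Fin ℓ) := ⟨(⟨0, hm⟩, ⟨0, hℓ⟩)⟩
    refine ⟨Finset.univ.sup' (Finset.univ_nonempty (α := Fin m × Fin ℓ))
      (fun p : Fin m × Fin ℓ => 2 * |(∑ k, wstar k * x p.1 k) - b p.2|), ?_⟩
    intro M hM
    have hMij : ∀ (i : Fin m) (j : Fin ℓ), 2 * |(∑ k, wstar k * x i k) - b j| ≤ M := by
      intro i j
      exact le_trans (Finset.le_sup'
        (fun p : Fin m × Fin ℓ => 2 * |(∑ k, wstar k * x p.1 k) - b p.2|)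
        (Finset.mem_univ (i, j))) hM
    have hval : ((∑ i, L i (∑ k, wstar k * x i k) : ℝ) : EReal) =
        (((∑ i, L i (∑ k, wstar k * x i k)) + lam * 0 : ℝ) : EReal) := by
      norm_num
    rw [hval]
    apply sInf_le
    refine ⟨wstar, fun _ _ => (1/2 : ℝ), 0, fun i j => ⟨by norm_num, by norm_num⟩,
      hsum, fun i j => (aux14 _ _ (hMij i j)).1, fun i j => (aux14 _ _ (hMij i j)).2, rfl⟩
end

section
/- (Membership in conv(X) via the disjunctive system.) A point (v, z, s) ∈ ℝ × ℝ^ℓ × ℝ belongs to the convex hull of X if and only if there exist α ∈ ℝ^{ℓ+1}_+ with Σ_{j=0}^ℓ α_j = 1 and reals v^0, ..., v^ℓ, s^0, ..., s^ℓ such that v = Σ_{j=0}^ℓ α_j v^j, s = Σ_{j=0}^ℓ α_j s^j, z = Σ_{j=1}^ℓ α_j 1_j, v^0 ≤ b_1, b_j ≤ v^j ≤ b_{j+1} for j ∈ [ℓ−1], v^ℓ ≥ b_ℓ, and ℒ(v^j) ≤ s^j for j = 0, ..., ℓ; moreover the weights are determined by z via α_0 = 1 − z_1, α_j = z_j − z_{j+1}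 for j ∈ [ℓ−1], and α_ℓ = z_ℓ. -/
/-- The single-observation set `X`. -/
def Xset (ℓ : ℕ) (b : Fin ℓ → ℝ) (L : ℝ → ℝ) : Set (ℝ × (Fin ℓ → ℝ) × ℝ) :=
  {x | (∀ j, x.2.1 j = 0 ∨ x.2.1 j = 1) ∧ L x.1 ≤ x.2.2 ∧
    ∀ j, 0 ≤ (x.1 - b j) * x.2.1 j ∧ 0 ≤ (b j - x.1) * (1 - x.2.1 j)}


private lemma wavg_le {ι : Type} (T : Finset ι) (w f : ι → ℝ) (B : ℝ)
    (hw : ∀ i ∈ T, 0 ≤ w i) (hpos : 0 < ∑ i ∈ T, w i) (hf : ∀ i ∈ T, f i ≤ B) :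
    T.centerMass w f ≤ B := by
  rw [Finset.centerMass, smul_eq_mul, inv_mul_le_iff₀ hpos]
  calc ∑ i ∈ T, w i • f i ≤ ∑ i ∈ T, w i * B :=
        Finset.sum_le_sum fun i hi => mul_le_mul_of_nonneg_left (hf i hi) (hw i hi)
    _ = (∑ i ∈ T, w i) * B := by rw [← Finset.sum_mul]

private lemma le_wavg {ι : Type} (T : Finset ι) (w f : ι → ℝ) (B : ℝ)
    (hw : ∀ i ∈ T, 0 ≤ w i) (hpos : 0 < ∑ i ∈ T, w i) (hf : ∀ i ∈ T, B ≤ f i) :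
    B ≤ T.centerMass w f := by
  rw [Finset.centerMass, smul_eq_mul, le_inv_mul_iff₀ hpos]
  calc (∑ i ∈ T, w i) * B = ∑ i ∈ T, w i * B := by rw [← Finset.sum_mul]
    _ ≤ ∑ i ∈ T, w i • f i :=
        Finset.sum_le_sum fun i hi => mul_le_mul_of_nonneg_left (hf i hi) (hw i hi)

private lemma wavg_mono {ι : Type} (T : Finset ι) (w f g : ι → ℝ)
    (hw : ∀ i ∈ T, 0 ≤ w i) (hpos : 0 < ∑ i ∈ T, w i) (hfg : ∀ i ∈ T, f i ≤ g i) :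
    T.centerMass w f ≤ T.centerMass w g := by
  rw [Finset.centerMass, Finset.centerMass, smul_eq_mul, smul_eq_mul]
  exact mul_le_mul_of_nonneg_left
    (Finset.sum_le_sum fun i hi => mul_le_mul_of_nonneg_left (hfg i hi) (hw i hi))
    (inv_nonneg.2 hpos.le)

open Classical in
/-- number of ones in the z-component -/
noncomputable def mdx {ℓ : ℕ} (x : ℝ × (Fin ℓ → ℝ) × ℝ) : ℕ :=
  (Finset.univ.filter (fun k => x.2.1 k = 1)).card

private lemma mdx_le {ℓ : ℕ} (x : ℝ × (Fin ℓ → ℝ) × ℝ) : mdx x ≤ ℓ := by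
  classical
  calc mdx x ≤ Finset.univ.card := Finset.card_filter_le _ _
    _ = ℓ := by simp

private lemma zchar {ℓ : ℕ} {b : Fin ℓ → ℝ} (hb : StrictMono b) {L : ℝ → ℝ}
    {x : ℝ × (Fin ℓ → ℝ) × ℝ} (hx : x ∈ Xset ℓ b L) (k : Fin ℓ) :
    x.2.1 k = if (k : ℕ) < mdx x then 1 else 0 := by
  classical
  obtain ⟨hbin, -, hcons⟩ := hx
  have hdc : ∀ k k' : Fin ℓ, k ≤ k' → x.2.1 k' = 1 → x.2.1 k = 1 := by
    intro k k' hkk h1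
    rcases eq_or_lt_of_le hkk with h | h
    · rw [h]; exact h1
    rcases hbin k with h0 | h0
    · exfalso
      have h2 := (hcons k').1
      have h3 := (hcons k).2
      rw [h1, mul_one] at h2
      rw [h0] at h3
      simp only [sub_zero, mul_one] at h3
      have hbb : b k < b k' := hb h
      linarith [sub_nonneg.1 h2, sub_nonneg.1 h3]
    · exact h0
  set S := Finset.univ.filter (fun k => x.2.1 k = 1) with hS
  have hmem_iff : ∀ k : Fin ℓ, k ∈ S ↔ x.2.1 k = 1 := by
    intro k; simp [hS]
  by_cases h : (k : ℕ) < mdx x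
  · rw [if_pos h]
    by_contra hne
    have hkS : k ∉ S := by rw [hmem_iff]; exact hne
    have hsub : S ⊆ Finset.Iio k := by
      intro j hj
      rw [Finset.mem_Iio]
      by_contra hjk
      exact hkS ((hmem_iff k).2 (hdc k j (le_of_not_gt hjk) ((hmem_iff j).1 hj)))
    have := Finset.card_le_card hsub
    rw [Fin.card_Iio] at this
    exact absurd h (by rw [mdx, ← hS]; omega)
  · rw [if_neg h]
    rcases hbin k with h0 | h0
    · exact h0
    exfalso
    have hkS : k ∈ S := (hmem_iff k).2 h0
    have hsub : Finset.Iic k ⊆ S := by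
      intro j hj
      rw [Finset.mem_Iic] at hj
      exact (hmem_iff j).2 (hdc j k hj h0)
    have := Finset.card_le_card hsub
    rw [Fin.card_Iic] at this
    exact h (by rw [mdx, ← hS]; omega)

private lemma vlow {ℓ : ℕ} {b : Fin ℓ → ℝ} (hb : StrictMono b) {L : ℝ → ℝ}
    {x : ℝ × (Fin ℓ → ℝ) × ℝ} (hx : x ∈ Xset ℓ b L) (k : Fin ℓ)
    (hk : (k : ℕ) < mdx x) : b k ≤ x.1 := by
  have h1 := zchar hb hx k
  rw [if_pos hk] at h1
  have h2 := (hx.2.2 k).1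
  rw [h1, mul_one] at h2
  linarith
private lemma vhigh {ℓ : ℕ} {b : Fin ℓ → ℝ} (hb : StrictMono b) {L : ℝ → ℝ}
    {x : ℝ × (Fin ℓ → ℝ) × ℝ} (hx : x ∈ Xset ℓ b L) (k : Fin ℓ)
    (hk : mdx x ≤ (k : ℕ)) : x.1 ≤ b k := by
  have h1 := zchar hb hx k
  rw [if_neg (by omega)] at h1
  have h2 := (hx.2.2 k).2
  rw [h1] at h2
  simp only [sub_zero, mul_one] at h2
  linarith


/-- Membership in `conv(X)` via the disjunctive system: `(v, z, s) ∈ conv(X)` iff there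
exist weights `α ∈ ℝ₊^{ℓ+1}` summing to one and points `v⁰, …, vℓ`, `s⁰, …, sℓ` with
`v = Σ αⱼ vʲ`, `s = Σ αⱼ sʲ`, `z = Σ αⱼ 𝟙ⱼ`, `v⁰ ≤ b₁`, `bⱼ ≤ vʲ ≤ b_{j+1}`
(`j ∈ [ℓ−1]`), `vℓ ≥ b_ℓ`, and `ℒ(vʲ) ≤ sʲ`; moreover the weights are determined by `z`
via `α₀ = 1 − z₁`, `αⱼ = zⱼ − z_{j+1}` (`j ∈ [ℓ−1]`), `α_ℓ = z_ℓ`. -/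
theorem stmt16 (ℓ : ℕ) (hℓ : 1 ≤ ℓ) (b : Fin ℓ → ℝ) (hb : StrictMono b)
    (L : ℝ → ℝ) (hL : ConvexOn ℝ Set.univ L)
    (v : ℝ) (z : Fin ℓ → ℝ) (s : ℝ) :
    ((v, z, s) ∈ convexHull ℝ (Xset ℓ b L) ↔
      ∃ α vv ss : Fin (ℓ + 1) → ℝ,
        (∀ j, 0 ≤ α j) ∧ (∑ j, α j) = 1 ∧
        v = ∑ j, α j * vv j ∧ s = ∑ j, α j * ss j ∧
        (∀ k : Fin ℓ,
          z k = ∑ j : Fin (ℓ + 1), α j * (if (k : ℕ) < (j : ℕ) then (1 : ℝ) else 0)) ∧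
        vv 0 ≤ b ⟨0, hℓ⟩ ∧
        (∀ j : Fin (ℓ + 1), ∀ _h1 : 1 ≤ (j : ℕ), ∀ _h2 : (j : ℕ) ≤ ℓ - 1,
          b ⟨(j : ℕ) - 1, by omega⟩ ≤ vv j ∧ vv j ≤ b ⟨(j : ℕ), by omega⟩) ∧
        b ⟨ℓ - 1, by omega⟩ ≤ vv (Fin.last ℓ) ∧
        (∀ j, L (vv j) ≤ ss j)) ∧
    (∀ α : Fin (ℓ + 1) → ℝ, (∑ j, α j) = 1 →
      (∀ k : Fin ℓ,
        z k = ∑ j : Fin (ℓ + 1), α j * (if (k : ℕ) < (j : ℕ) then (1 : ℝ) else 0)) →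
      α 0 = 1 - z ⟨0, hℓ⟩ ∧
      (∀ j : Fin (ℓ + 1), ∀ _h1 : 1 ≤ (j : ℕ), ∀ _h2 : (j : ℕ) ≤ ℓ - 1,
        α j = z ⟨(j : ℕ) - 1, by omega⟩ - z ⟨(j : ℕ), by omega⟩) ∧
      α (Fin.last ℓ) = z ⟨ℓ - 1, by omega⟩) := by
  constructor
  · constructor
    · intro h
      classical
      rw [convexHull_eq] at h
      obtain ⟨ι, t, w, p, hw0, hw1, hp, hcm⟩ := h
      rw [Finset.centerMass_eq_of_sum_1 _ _ hw1] at hcm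
      have hv : v = ∑ i ∈ t, w i * (p i).1 := by
        have := congrArg Prod.fst hcm
        simp only [Prod.fst_sum, Prod.smul_fst, smul_eq_mul] at this
        exact this.symm
      have hs : s = ∑ i ∈ t, w i * (p i).2.2 := by
        have := congrArg (fun q : ℝ × (Fin ℓ → ℝ) × ℝ => q.2.2) hcm
        simp only [Prod.snd_sum, Prod.smul_snd, smul_eq_mul] at this
        exact this.symm
      have hz : ∀ k, z k = ∑ i ∈ t, w i * (p i).2.1 k := by
        intro k
        have := congrArg (fun q : ℝ × (Fin ℓ → ℝ) × ℝ => q.2.1 k) hcm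
        simp only [Prod.snd_sum, Prod.fst_sum, Prod.smul_snd, Prod.smul_fst,
          Finset.sum_apply, Pi.smul_apply, smul_eq_mul] at this
        exact this.symm
      have hmle : ∀ i, mdx (p i) < ℓ + 1 := fun i => Nat.lt_succ_of_le (mdx_le _)
      set g : ι → Fin (ℓ + 1) := fun i => ⟨mdx (p i), hmle i⟩ with hg
      set T : Fin (ℓ + 1) → Finset ι := fun j => t.filter (fun i => g i = j) with hT
      set α : Fin (ℓ + 1) → ℝ := fun j => ∑ i ∈ T j, w i with hα
      have hTsub : ∀ j, T j ⊆ t := fun j => Finset.filter_subset _ _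
      have hwT : ∀ j, ∀ i ∈ T j, 0 ≤ w i := fun j i hi => hw0 i (hTsub j hi)
      have hα0 : ∀ j, 0 ≤ α j := fun j => Finset.sum_nonneg (hwT j)
      have hfib : ∀ f : ι → ℝ, ∑ j, ∑ i ∈ T j, f i = ∑ i ∈ t, f i := fun f =>
        Finset.sum_fiberwise t g f
      have hα1 : ∑ j, α j = 1 := by rw [← hw1]; exact hfib w
      have hwz : ∀ j, α j = 0 → ∀ i ∈ T j, w i = 0 := fun j hj =>
        (Finset.sum_eq_zero_iff_of_nonneg (hwT j)).1 hj
      have hfiber1 : ∀ j : Fin (ℓ + 1), ∀ i ∈ T j, mdx (p i) = (j : ℕ) := by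
        intro j i hi
        have h2 := (Finset.mem_filter.1 hi).2
        simpa [hg, Fin.ext_iff] using h2
      set c : Fin (ℓ + 1) → ℝ :=
        fun j => if h : (j : ℕ) = 0 then b ⟨0, hℓ⟩
          else b ⟨(j : ℕ) - 1, by have := j.isLt; omega⟩ with hc
      set vv : Fin (ℓ + 1) → ℝ :=
        fun j => if α j = 0 then c j else (T j).centerMass w (fun i => (p i).1) with hvv
      set ss : Fin (ℓ + 1) → ℝ :=
        fun j => if α j = 0 then L (c j) else (T j).centerMass w (fun i => (p i).2.2) with hss
      have hαsum : ∀ j, (∑ i ∈ T j, w i) = α j := fun j => rfl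
      have key : ∀ (f : ι → ℝ) (j : Fin (ℓ + 1)), α j ≠ 0 →
          α j * (T j).centerMass w f = ∑ i ∈ T j, w i * f i := by
        intro f j hj
        rw [Finset.centerMass, hαsum, smul_eq_mul, ← mul_assoc, mul_inv_cancel₀ hj, one_mul]
        simp [smul_eq_mul]
      have hpos : ∀ j, α j ≠ 0 → 0 < ∑ i ∈ T j, w i := by
        intro j hj
        rw [hαsum]
        exact (hα0 j).lt_of_ne (Ne.symm hj)
      have hαvv : ∀ j, α j * vv j = ∑ i ∈ T j, w i * (p i).1 := by
        intro j
        by_cases hj : α j = 0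
        · rw [hj, zero_mul]
          exact (Finset.sum_eq_zero fun i hi => by rw [hwz j hj i hi, zero_mul]).symm
        · simp only [hvv, if_neg hj]
          exact key _ j hj
      have hαss : ∀ j, α j * ss j = ∑ i ∈ T j, w i * (p i).2.2 := by
        intro j
        by_cases hj : α j = 0
        · rw [hj, zero_mul]
          exact (Finset.sum_eq_zero fun i hi => by rw [hwz j hj i hi, zero_mul]).symm
        · simp only [hss, if_neg hj]
          exact key _ j hj
      refine ⟨α, vv, ss, hα0, hα1, ?_, ?_, ?_, ?_, ?_, ?_, ?_⟩
      · rw [hv, ← hfib (fun i => w i * (p i).1)]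
        exact Finset.sum_congr rfl fun j _ => (hαvv j).symm
      · rw [hs, ← hfib (fun i => w i * (p i).2.2)]
        exact Finset.sum_congr rfl fun j _ => (hαss j).symm
      · intro k
        rw [hz k, ← hfib (fun i => w i * (p i).2.1 k)]
        refine Finset.sum_congr rfl fun j _ => ?_
        have e : ∀ i ∈ T j, w i * (p i).2.1 k
            = w i * (if (k : ℕ) < (j : ℕ) then (1 : ℝ) else 0) := by
          intro i hi
          rw [zchar hb (hp i (hTsub j hi)) k, hfiber1 j i hi]
        rw [Finset.sum_congr rfl e, ← Finset.sum_mul, hαsum]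
      · -- vv 0 ≤ b ⟨0, hℓ⟩
        by_cases hj : α 0 = 0
        · simp only [hvv, if_pos hj, hc]
          rw [dif_pos (show ((0 : Fin (ℓ + 1)) : ℕ) = 0 from rfl)]
        · simp only [hvv, if_neg hj]
          refine wavg_le _ _ _ _ (hwT 0) (hpos 0 hj) fun i hi => ?_
          exact vhigh hb (hp i (hTsub 0 hi)) ⟨0, hℓ⟩ (by rw [hfiber1 0 i hi]; rfl)
      · -- middle
        intro j h1 h2
        have hjlt : ((j : ℕ) : ℕ) - 1 < ℓ := by omega
        by_cases hj : α j = 0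
        · simp only [hvv, if_pos hj, hc]
          rw [dif_neg (by omega)]
          constructor
          · exact le_refl _
          · exact hb.monotone (by show (j : ℕ) - 1 ≤ (j : ℕ); omega)
        · simp only [hvv, if_neg hj]
          constructor
          · refine le_wavg _ _ _ _ (hwT j) (hpos j hj) fun i hi => ?_
            refine vlow hb (hp i (hTsub j hi)) ⟨(j : ℕ) - 1, by omega⟩ ?_
            rw [hfiber1 j i hi]
            show (j : ℕ) - 1 < (j : ℕ)
            omega
          · refine wavg_le _ _ _ _ (hwT j) (hpos j hj) fun i hi => ?_
            refine vhigh hb (hp i (hTsub j hi)) ⟨(j : ℕ), by omega⟩ ?_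
            rw [hfiber1 j i hi]
      · -- last
        by_cases hj : α (Fin.last ℓ) = 0
        · simp only [hvv, if_pos hj, hc]
          rw [dif_neg (by simp only [Fin.val_last]; omega)]
          exact le_of_eq (congrArg b (Fin.ext (by simp)))
        · simp only [hvv, if_neg hj]
          refine le_wavg _ _ _ _ (hwT _) (hpos _ hj) fun i hi => ?_
          refine vlow hb (hp i (hTsub _ hi)) ⟨ℓ - 1, by omega⟩ ?_
          rw [hfiber1 _ i hi]
          show ℓ - 1 < (Fin.last ℓ : ℕ)
          simp only [Fin.val_last]
          omega
      · -- L bound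
        intro j
        by_cases hj : α j = 0
        · simp only [hvv, hss, if_pos hj]
          exact le_refl _
        · simp only [hvv, hss, if_neg hj]
          calc L ((T j).centerMass w fun i => (p i).1)
              ≤ (T j).centerMass w (fun i => L ((p i).1)) := by
                have := hL.map_centerMass_le (hwT j) (hpos j hj) (fun i _ => Set.mem_univ ((p i).1))
                simpa [Function.comp_def] using this
            _ ≤ (T j).centerMass w (fun i => (p i).2.2) :=
                wavg_mono _ _ _ _ (hwT j) (hpos j hj) fun i hi => (hp i (hTsub j hi)).2.1
    · intro h
      obtain ⟨α, vv, ss, hα0, hα1, hv, hs, hzk, hv0, hvmid, hvlast, hLs⟩ := h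
      set x : Fin (ℓ + 1) → ℝ × (Fin ℓ → ℝ) × ℝ :=
        fun j => (vv j, fun k => if (k : ℕ) < (j : ℕ) then (1 : ℝ) else 0, ss j) with hx
      -- each x j ∈ Xset
      have hmem : ∀ j : Fin (ℓ + 1), x j ∈ Xset ℓ b L := by
        intro j
        refine ⟨fun k => ?_, hLs j, fun k => ?_⟩
        · by_cases h : (k : ℕ) < (j : ℕ) <;> simp [hx, h]
        · have hbk1 : (k : ℕ) < (j : ℕ) → b k ≤ vv j := by
            intro hkj
            have hj1 : 1 ≤ (j : ℕ) := by omega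
            by_cases hjl : (j : ℕ) ≤ ℓ - 1
            · have hm := (hvmid j hj1 hjl).1
              have : b k ≤ b ⟨(j : ℕ) - 1, by omega⟩ := by
                apply hb.monotone
                show (k : ℕ) ≤ (j : ℕ) - 1
                omega
              linarith
            · have hje : j = Fin.last ℓ := Fin.ext (by have := j.isLt; simp [Fin.last]; omega)
              have : b k ≤ b ⟨ℓ - 1, by omega⟩ := by
                apply hb.monotone
                show (k : ℕ) ≤ ℓ - 1
                have := k.isLt; omega
              rw [hje]
              linarith
          have hbk2 : ¬ (k : ℕ) < (j : ℕ) → vv j ≤ b k := by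
            intro hkj
            by_cases hj0 : (j : ℕ) = 0
            · have hje : j = 0 := Fin.ext (by simpa using hj0)
              have : b ⟨0, hℓ⟩ ≤ b k := by
                apply hb.monotone
                show (0 : ℕ) ≤ (k : ℕ)
                omega
              rw [hje]
              linarith
            · have hjl : (j : ℕ) ≤ ℓ - 1 := by have := k.isLt; omega
              have hm := (hvmid j (by omega) hjl).2
              have : b ⟨(j : ℕ), by have := k.isLt; omega⟩ ≤ b k := by
                apply hb.monotone
                show (j : ℕ) ≤ (k : ℕ)
                omega
              linarith
          by_cases h : (k : ℕ) < (j : ℕ)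
          · constructor
            · simp only [hx, if_pos h, mul_one]
              have := hbk1 h; linarith
            · simp [hx, if_pos h]
          · constructor
            · simp [hx, if_neg h]
            · simp only [hx, if_neg h, sub_zero, mul_one]
              have := hbk2 h; linarith
      have hcm := Finset.centerMass_mem_convexHull (Finset.univ) (fun j _ => hα0 j)
        (by rw [hα1]; norm_num) (fun j _ => hmem j)
      rw [Finset.centerMass_eq_of_sum_1 _ _ hα1] at hcm
      convert hcm using 1
      have h1 : (∑ j, α j • x j).1 = ∑ j, α j * (x j).1 := by
        rw [Prod.fst_sum]; simp
      have h2 : (∑ j, α j • x j).2.1 = ∑ j, α j • (x j).2.1 := by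
        rw [Prod.snd_sum, Prod.fst_sum]
        simp
      have h3 : (∑ j, α j • x j).2.2 = ∑ j, α j * (x j).2.2 := by
        rw [Prod.snd_sum, Prod.snd_sum]
        simp
      refine Prod.ext ?_ (Prod.ext ?_ ?_) <;> simp only [h1, h2, h3]
      · exact hv
      · funext k
        rw [Finset.sum_apply]
        simpa [hx] using hzk k
      · exact hs
  · intro α hsum hz
    refine ⟨?_, ?_, ?_⟩
    · have h0 : z ⟨0, hℓ⟩ = 1 - α 0 := by
        rw [hz ⟨0, hℓ⟩]
        simp only [Fin.val_mk]
        have e : ∀ j : Fin (ℓ + 1),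
            α j * (if (0:ℕ) < (j : ℕ) then (1:ℝ) else 0)
              = α j - (if j = 0 then α j else 0) := by
          intro j
          rcases Nat.eq_zero_or_pos (j : ℕ) with h | h
          · rw [if_neg (by omega), mul_zero, if_pos (Fin.ext h), sub_self]
          · rw [if_pos h, mul_one, if_neg (fun hc => by simp [hc] at h), sub_zero]
        rw [Finset.sum_congr rfl (fun j _ => e j), Finset.sum_sub_distrib, hsum,
          Finset.sum_ite_eq' Finset.univ 0 α, if_pos (Finset.mem_univ _)]
      rw [h0]; ring
    · intro j h1 h2
      rw [hz ⟨(j:ℕ) - 1, by omega⟩, hz ⟨(j:ℕ), by omega⟩]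
      simp only [Fin.val_mk]
      rw [← Finset.sum_sub_distrib]
      have e : ∀ j' : Fin (ℓ + 1),
          α j' * (if (j:ℕ) - 1 < (j':ℕ) then (1:ℝ) else 0)
            - α j' * (if (j:ℕ) < (j':ℕ) then (1:ℝ) else 0)
            = if j' = j then α j' else 0 := by
        intro j'
        have hb1 := j'.isLt
        by_cases hc : (j:ℕ) < (j':ℕ)
        · rw [if_pos (by omega), if_pos hc, if_neg (fun he => by rw [he] at hc; omega)]
          ring
        · by_cases ha : (j:ℕ) - 1 < (j':ℕ)
          · rw [if_pos ha, if_neg hc, if_pos (Fin.ext (by omega))]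
            ring
          · rw [if_neg ha, if_neg hc, if_neg (fun he => by rw [he] at ha; omega)]
            ring
      rw [Finset.sum_congr rfl (fun j' _ => e j'), Finset.sum_ite_eq' Finset.univ j α,
        if_pos (Finset.mem_univ _)]
    · rw [hz ⟨ℓ - 1, by omega⟩]
      simp only [Fin.val_mk]
      have e : ∀ j : Fin (ℓ + 1),
          α j * (if ℓ - 1 < (j:ℕ) then (1:ℝ) else 0)
            = if j = Fin.last ℓ then α j else 0 := by
        intro j
        have hb2 := j.isLt
        by_cases h : ℓ - 1 < (j:ℕ)
        · rw [if_pos h, mul_one, if_pos (Fin.ext (by simp [Fin.last]; omega))]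
        · rw [if_neg h, mul_zero, if_neg (fun hc => by simp [hc, Fin.last] at h; omega)]
      rw [Finset.sum_congr rfl (fun j _ => e j), Finset.sum_ite_eq' Finset.univ _ α,
        if_pos (Finset.mem_univ _)]
end
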